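/- arXiv:0801.3680 — 5 statements merged into one kernel-verified Lean document; each statement's English description precedes it below -/
import Mathlib

section
/- Let q and K be natural numbers and let U_1, ..., U_K and V_1, ..., V_K be finite subsets of some universe such that |U_i| + |V_i| ≤ q for every i, and such that U_i ∩ V_j is not a subset of V_i for every pair i ≠ j. Then K ≤ C(q, ⌊q/2⌋), the binomial coefficient q choose ⌊q/2⌋. -/
open Finset

lemma exists_perm_image {n : ℕ} {P Q P' Q' : Finset (Fin n)}
    (h1 : P.card = P'.card) (h2 : Q.card = Q'.card)
    (hPQ : Disjoint P Q) (hPQ' : Disjoint P' Q') :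
    ∃ ρ : Equiv.Perm (Fin n), P.image ρ = P' ∧ Q.image ρ = Q' := by
  have hC : ((P ∪ Q)ᶜ : Finset (Fin n)).card = ((P' ∪ Q')ᶜ : Finset (Fin n)).card := by
    rw [card_compl, card_compl, card_union_of_disjoint hPQ, card_union_of_disjoint hPQ', h1, h2]
  let e1 := Finset.equivOfCardEq h1
  let e2 := Finset.equivOfCardEq h2
  let e3 := Finset.equivOfCardEq hC
  classical
  let f : Fin n → Fin n := fun x =>
    if hx : x ∈ P then e1 ⟨x, hx⟩
    else if hx' : x ∈ Q then e2 ⟨x, hx'⟩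
    else e3 ⟨x, by simp [hx, hx']⟩
  have hfP : ∀ x (hx : x ∈ P), f x = e1 ⟨x, hx⟩ := fun x hx => by simp [f, hx]
  have hfQ : ∀ x (hx : x ∈ Q), f x = e2 ⟨x, hx⟩ := fun x hx => by
    have : x ∉ P := disjoint_right.mp hPQ hx
    simp [f, this, hx]
  have hmemP : ∀ x ∈ P, f x ∈ P' := fun x hx => by rw [hfP x hx]; exact (e1 ⟨x, hx⟩).2
  have hmemQ : ∀ x ∈ Q, f x ∈ Q' := fun x hx => by rw [hfQ x hx]; exact (e2 ⟨x, hx⟩).2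
  have hmemC : ∀ x, x ∉ P → x ∉ Q → f x ∉ P' ∪ Q' := fun x hx hx' => by
    have : f x = e3 ⟨x, by simp [hx, hx']⟩ := by simp [f, hx, hx']
    rw [this]
    have := (e3 ⟨x, by simp [hx, hx']⟩).2
    simpa using this
  have hinj : Function.Injective f := by
    intro x y hxy
    by_cases hxP : x ∈ P <;> by_cases hyP : y ∈ P <;>
      by_cases hxQ : x ∈ Q <;> by_cases hyQ : y ∈ Q
    all_goals first
      | (exact absurd hxP (disjoint_right.mp hPQ hxQ))
      | (exact absurd hyP (disjoint_right.mp hPQ hyQ))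
      | skip
    · have := hxy; rw [hfP x hxP, hfP y hyP] at this
      exact Subtype.mk_eq_mk.mp (e1.injective (Subtype.ext this))
    · exact absurd (hxy ▸ hmemP x hxP) (fun h => disjoint_left.mp hPQ' h (hmemQ y hyQ))
    · exact absurd (hmemP x hxP) (fun h => hmemC y hyP hyQ (hxy ▸ mem_union_left _ h))
    · exact absurd (hmemP y hyP) (fun h => disjoint_left.mp hPQ' h (hxy ▸ hmemQ x hxQ))
    · exact absurd (hmemP y hyP) (fun h => hmemC x hxP hxQ (hxy ▸ mem_union_left _ h))
    · have := hxy; rw [hfQ x hxQ, hfQ y hyQ] at this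
      exact Subtype.mk_eq_mk.mp (e2.injective (Subtype.ext this))
    · exact absurd (hmemQ x hxQ) (fun h => hmemC y hyP hyQ (hxy ▸ mem_union_right _ h))
    · exact absurd (hmemQ y hyQ) (fun h => hmemC x hxP hxQ (hxy ▸ mem_union_right _ h))
    · have hx3 : f x = e3 ⟨x, by simp [hxP, hxQ]⟩ := by simp [f, hxP, hxQ]
      have hy3 : f y = e3 ⟨y, by simp [hyP, hyQ]⟩ := by simp [f, hyP, hyQ]
      rw [hx3, hy3] at hxy
      exact Subtype.mk_eq_mk.mp (e3.injective (Subtype.ext hxy))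
  let ρ := Equiv.ofBijective f (Finite.injective_iff_bijective.mp hinj)
  refine ⟨ρ, ?_, ?_⟩
  · apply eq_of_subset_of_card_le
    · intro y hy
      obtain ⟨x, hx, rfl⟩ := mem_image.mp hy
      exact hmemP x hx
    · rw [show ⇑ρ = f from rfl, card_image_of_injective _ hinj, h1]
  · apply eq_of_subset_of_card_le
    · intro y hy
      obtain ⟨x, hx, rfl⟩ := mem_image.mp hy
      exact hmemQ x hx
    · rw [show ⇑ρ = f from rfl, card_image_of_injective _ hinj, h2]

lemma fib_eq {n : ℕ} (A B : Finset (Fin n)) {P Q P' Q' : Finset (Fin n)}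
    (h1 : P.card = P'.card) (h2 : Q.card = Q'.card)
    (hPQ : Disjoint P Q) (hPQ' : Disjoint P' Q')
    (hex : ∃ ρ : Equiv.Perm (Fin n), P.image ρ = P' ∧ Q.image ρ = Q') :
    ((univ : Finset (Equiv.Perm (Fin n))).filter
        fun (σ : Equiv.Perm (Fin n)) => A.image ⇑σ = P ∧ B.image ⇑σ = Q).card =
    ((univ : Finset (Equiv.Perm (Fin n))).filter
        fun (σ : Equiv.Perm (Fin n)) => A.image ⇑σ = P' ∧ B.image ⇑σ = Q').card := by
  obtain ⟨ρ, hρP, hρQ⟩ := hex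
  refine Finset.card_bij' (fun σ _ => σ.trans ρ) (fun τ _ => τ.trans ρ.symm) ?_ ?_ ?_ ?_
  · intro σ hσ
    obtain ⟨hA, hB⟩ := (mem_filter.mp hσ).2
    refine mem_filter.mpr ⟨mem_univ _, ?_, ?_⟩
    · rw [show ⇑(σ.trans ρ) = ⇑ρ ∘ ⇑σ from rfl, ← image_image, hA, hρP]
    · rw [show ⇑(σ.trans ρ) = ⇑ρ ∘ ⇑σ from rfl, ← image_image, hB, hρQ]
  · intro τ hτ
    obtain ⟨hA, hB⟩ := (mem_filter.mp hτ).2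
    refine mem_filter.mpr ⟨mem_univ _, ?_, ?_⟩
    · rw [show ⇑(τ.trans ρ.symm) = ⇑ρ.symm ∘ ⇑τ from rfl, ← image_image, hA, ← hρP,
        image_image]
      simp
    · rw [show ⇑(τ.trans ρ.symm) = ⇑ρ.symm ∘ ⇑τ from rfl, ← image_image, hB, ← hρQ,
        image_image]
      simp
  · intro σ _; ext x; simp
  · intro τ _; ext x; simp
open Finset

section SortedPairs
variable {n a b : ℕ}

private def PZ (U : Finset (Fin n)) (h : U.card = a + b) : Finset (Fin n) :=
  (univ : Finset (Fin a)).image fun k => U.orderEmbOfFin h (Fin.castLE (Nat.le_add_right a b) k)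

private def QZ (U : Finset (Fin n)) (h : U.card = a + b) : Finset (Fin n) :=
  (univ : Finset (Fin b)).image fun k => U.orderEmbOfFin h (Fin.natAdd a k)

private def RZ (U : Finset (Fin n)) (h : U.card = a + b) (P : Finset (Fin n)) :
    Finset (Fin (a + b)) :=
  (univ : Finset (Fin (a + b))).filter fun k => U.orderEmbOfFin h k ∈ P

private lemma PZ_card (U : Finset (Fin n)) (h : U.card = a + b) : (PZ U h).card = a := by
  have hinj : Function.Injective
      (fun k : Fin a => U.orderEmbOfFin h (Fin.castLE (Nat.le_add_right a b) k)) :=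
    fun x y hxy => Fin.castLE_injective _ ((U.orderEmbOfFin h).injective hxy)
  rw [PZ, card_image_of_injective _ hinj, card_univ, Fintype.card_fin]

private lemma QZ_card (U : Finset (Fin n)) (h : U.card = a + b) : (QZ U h).card = b := by
  have hinj : Function.Injective
      (fun k : Fin b => U.orderEmbOfFin h (Fin.natAdd a k)) := by
    intro x y hxy
    have := congrArg Fin.val ((U.orderEmbOfFin h).injective hxy)
    simp only [Fin.coe_natAdd] at this
    exact Fin.val_injective (by omega)
  rw [QZ, card_image_of_injective _ hinj, card_univ, Fintype.card_fin]

private lemma PZ_subset (U : Finset (Fin n)) (h : U.card = a + b) : PZ U h ⊆ U := by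
  intro x hx
  obtain ⟨k, _, rfl⟩ := mem_image.mp hx
  exact Finset.orderEmbOfFin_mem U h _

private lemma QZ_subset (U : Finset (Fin n)) (h : U.card = a + b) : QZ U h ⊆ U := by
  intro x hx
  obtain ⟨k, _, rfl⟩ := mem_image.mp hx
  exact Finset.orderEmbOfFin_mem U h _

private lemma PZ_QZ_sorted (U : Finset (Fin n)) (h : U.card = a + b) :
    ∀ x ∈ PZ U h, ∀ y ∈ QZ U h, x < y := by
  intro x hx y hy
  obtain ⟨k, _, rfl⟩ := mem_image.mp hx
  obtain ⟨j, _, rfl⟩ := mem_image.mp hy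
  apply (U.orderEmbOfFin h).strictMono
  rw [Fin.lt_def]
  simp only [Fin.coe_castLE, Fin.coe_natAdd]
  omega
private lemma PZ_QZ_disjoint (U : Finset (Fin n)) (h : U.card = a + b) :
    Disjoint (PZ U h) (QZ U h) := by
  rw [disjoint_left]
  intro x hx hx'
  exact lt_irrefl x (PZ_QZ_sorted U h x hx x hx')

private lemma PZ_union_QZ (U : Finset (Fin n)) (h : U.card = a + b) :
    PZ U h ∪ QZ U h = U := by
  apply eq_of_subset_of_card_le (union_subset (PZ_subset U h) (QZ_subset U h))
  rw [card_union_of_disjoint (PZ_QZ_disjoint U h), PZ_card, QZ_card, h]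

private lemma RZ_card (U : Finset (Fin n)) (h : U.card = a + b) (P : Finset (Fin n))
    (hP : P ⊆ U) : (RZ U h P).card = P.card := by
  apply Finset.card_bij (fun k _ => U.orderEmbOfFin h k)
  · intro k hk; exact (mem_filter.mp hk).2
  · intro k hk j hj hkj; exact (U.orderEmbOfFin h).injective hkj
  · intro p hp
    have : p ∈ U := hP hp
    obtain ⟨k, hk⟩ := Set.mem_range.mp (by rw [Finset.range_orderEmbOfFin]; exact this :
      p ∈ Set.range (U.orderEmbOfFin h))
    exact ⟨k, mem_filter.mpr ⟨mem_univ _, hk ▸ hp⟩, hk⟩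

private lemma RZ_image (U : Finset (Fin n)) (h : U.card = a + b) (P : Finset (Fin n))
    (hP : P ⊆ U) : (RZ U h P).image (fun k => U.orderEmbOfFin h k) = P := by
  apply Finset.Subset.antisymm
  · intro x hx
    obtain ⟨k, hk, rfl⟩ := mem_image.mp hx
    exact (mem_filter.mp hk).2
  · intro p hp
    have : p ∈ U := hP hp
    obtain ⟨k, hk⟩ := Set.mem_range.mp (by rw [Finset.range_orderEmbOfFin]; exact this :
      p ∈ Set.range (U.orderEmbOfFin h))
    exact mem_image.mpr ⟨k, mem_filter.mpr ⟨mem_univ _, hk ▸ hp⟩, hk⟩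

end SortedPairs
open Finset in
private lemma RZ_inj {n a b : ℕ} (U U' : Finset (Fin n)) (h : U.card = a + b)
    (h' : U'.card = a + b) (P P' : Finset (Fin n)) (hUU' : U = U')
    (hP : P ⊆ U) (hP' : P' ⊆ U') (hR : RZ U h P = RZ U' h' P') : P = P' := by
  subst hUU'
  have hR2 : RZ U h P = RZ U h P' := hR
  rw [← RZ_image U h P hP, ← RZ_image U h P' hP', hR2]

open Finset in
lemma sorted_pairs_bound (n a b : ℕ) :
    (((univ : Finset (Fin n)).powersetCard a ×ˢ
        (univ : Finset (Fin n)).powersetCard b).filter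
      fun pq => Disjoint pq.1 pq.2).card ≤
    ((((univ : Finset (Fin n)).powersetCard a ×ˢ
        (univ : Finset (Fin n)).powersetCard b).filter
      fun pq => Disjoint pq.1 pq.2 ∧ ∀ x ∈ pq.1, ∀ y ∈ pq.2, x < y).card) * (a + b).choose a := by
  classical
  set all := (((univ : Finset (Fin n)).powersetCard a ×ˢ
      (univ : Finset (Fin n)).powersetCard b).filter
    fun pq => Disjoint pq.1 pq.2) with hall
  set srt := (((univ : Finset (Fin n)).powersetCard a ×ˢ
      (univ : Finset (Fin n)).powersetCard b).filter
    fun pq => Disjoint pq.1 pq.2 ∧ ∀ x ∈ pq.1, ∀ y ∈ pq.2, x < y) with hsrt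
  have key : ∀ pq ∈ all, (pq.1 ∪ pq.2).card = a + b := by
    intro pq hpq
    obtain ⟨hmem, hd⟩ := mem_filter.mp hpq
    obtain ⟨h1, h2⟩ := mem_product.mp hmem
    rw [card_union_of_disjoint hd, mem_powersetCard_univ.mp h1, mem_powersetCard_univ.mp h2]
  let f : Finset (Fin n) × Finset (Fin n) → (Finset (Fin n) × Finset (Fin n)) × Finset (Fin (a + b)) :=
    fun pq => if h : (pq.1 ∪ pq.2).card = a + b then
      ((PZ (pq.1 ∪ pq.2) h, QZ (pq.1 ∪ pq.2) h), RZ (pq.1 ∪ pq.2) h pq.1)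
    else ((∅, ∅), ∅)
  have hcard_target :
      (srt ×ˢ (univ : Finset (Fin (a + b))).powersetCard a).card = srt.card * (a + b).choose a := by
    rw [card_product, card_powersetCard, card_univ, Fintype.card_fin]
  rw [← hcard_target]
  apply card_le_card_of_injOn f
  · intro pq hpq
    have h := key pq hpq
    obtain ⟨hmem, hd⟩ := mem_filter.mp hpq
    obtain ⟨h1, h2⟩ := mem_product.mp hmem
    have hfpq : f pq = ((PZ (pq.1 ∪ pq.2) h, QZ (pq.1 ∪ pq.2) h), RZ (pq.1 ∪ pq.2) h pq.1) :=
      dif_pos h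
    rw [mem_coe, mem_product, hfpq]
    constructor
    · refine mem_filter.mpr ⟨mem_product.mpr ⟨?_, ?_⟩, PZ_QZ_disjoint _ h, PZ_QZ_sorted _ h⟩
      · exact mem_powersetCard_univ.mpr (PZ_card _ h)
      · exact mem_powersetCard_univ.mpr (QZ_card _ h)
    · exact mem_powersetCard_univ.mpr
        ((RZ_card _ h pq.1 subset_union_left).trans (mem_powersetCard_univ.mp h1))
  · intro pq hpq pq' hpq' hf
    rw [mem_coe] at hpq hpq'
    have h := key pq hpq
    have h' := key pq' hpq'
    rw [show f pq = ((PZ (pq.1 ∪ pq.2) h, QZ (pq.1 ∪ pq.2) h), RZ (pq.1 ∪ pq.2) h pq.1)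
        from dif_pos h,
      show f pq' = ((PZ (pq'.1 ∪ pq'.2) h', QZ (pq'.1 ∪ pq'.2) h'), RZ (pq'.1 ∪ pq'.2) h' pq'.1)
        from dif_pos h'] at hf
    have hU : pq.1 ∪ pq.2 = pq'.1 ∪ pq'.2 := by
      have e1 : PZ (pq.1 ∪ pq.2) h = PZ (pq'.1 ∪ pq'.2) h' := congrArg (·.1.1) hf
      have e2 : QZ (pq.1 ∪ pq.2) h = QZ (pq'.1 ∪ pq'.2) h' := congrArg (·.1.2) hf
      rw [← PZ_union_QZ (pq.1 ∪ pq.2) h, ← PZ_union_QZ (pq'.1 ∪ pq'.2) h', e1, e2]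
    have hR : RZ (pq.1 ∪ pq.2) h pq.1 = RZ (pq'.1 ∪ pq'.2) h' pq'.1 := congrArg (·.2) hf
    have hP : pq.1 = pq'.1 :=
      RZ_inj _ _ h h' _ _ hU subset_union_left subset_union_left hR
    have hd := (mem_filter.mp hpq).2
    have hd' := (mem_filter.mp hpq').2
    have hQ : pq.2 = pq'.2 := by
      have := union_sdiff_cancel_left hd
      have h2' := union_sdiff_cancel_left hd'
      rw [← this, ← h2', hU, hP]
    exact Prod.ext hP hQ
open Finset in
lemma core_lemma {n q K : ℕ} (A B : Fin K → Finset (Fin n))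
    (hd : ∀ i, Disjoint (A i) (B i)) (hc : ∀ i, (A i).card + (B i).card ≤ q)
    (hx : ∀ i j, i ≠ j → (A i ∩ B j).Nonempty) : K ≤ q.choose (q / 2) := by
  classical
  set N := (univ : Finset (Equiv.Perm (Fin n))).card with hNdef
  have hN : 0 < N := Finset.card_pos.mpr ⟨1, mem_univ _⟩
  let E : Fin K → Finset (Equiv.Perm (Fin n)) := fun i =>
    univ.filter fun σ => ∀ x ∈ A i, ∀ y ∈ B i, σ x < σ y
  -- Step A: per-index bound
  have stepA : ∀ i, N ≤ (E i).card * q.choose (q / 2) := by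
    intro i
    set a := (A i).card with ha
    set b := (B i).card with hb
    set all := (((univ : Finset (Fin n)).powersetCard a ×ˢ
        (univ : Finset (Fin n)).powersetCard b).filter
      fun pq => Disjoint pq.1 pq.2) with hall
    set srt := (((univ : Finset (Fin n)).powersetCard a ×ˢ
        (univ : Finset (Fin n)).powersetCard b).filter
      fun pq => Disjoint pq.1 pq.2 ∧ ∀ x ∈ pq.1, ∀ y ∈ pq.2, x < y) with hsrt
    let f : Equiv.Perm (Fin n) → Finset (Fin n) × Finset (Fin n) :=
      fun σ => ((A i).image ⇑σ, (B i).image ⇑σ)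
    have hfall : ∀ σ : Equiv.Perm (Fin n), f σ ∈ all := by
      intro σ
      refine mem_filter.mpr ⟨mem_product.mpr ⟨?_, ?_⟩, ?_⟩
      · exact mem_powersetCard_univ.mpr (card_image_of_injective _ σ.injective)
      · exact mem_powersetCard_univ.mpr (card_image_of_injective _ σ.injective)
      · exact (Finset.disjoint_image σ.injective).mpr (hd i)
    have hfib : ∀ pq ∈ all,
        ((univ : Finset (Equiv.Perm (Fin n))).filter fun σ => f σ = pq).card =
        ((univ : Finset (Equiv.Perm (Fin n))).filter fun σ => f σ = (A i, B i)).card := by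
      intro pq hpq
      obtain ⟨hmem, hdisj⟩ := mem_filter.mp hpq
      obtain ⟨h1, h2⟩ := mem_product.mp hmem
      have e1 : ((univ : Finset (Equiv.Perm (Fin n))).filter fun σ => f σ = pq) =
          (univ.filter fun σ : Equiv.Perm (Fin n) =>
            (A i).image ⇑σ = pq.1 ∧ (B i).image ⇑σ = pq.2) := by
        ext σ; simp only [mem_filter, mem_univ, true_and, f, Prod.ext_iff]
      have e2 : ((univ : Finset (Equiv.Perm (Fin n))).filter fun σ => f σ = (A i, B i)) =
          (univ.filter fun σ : Equiv.Perm (Fin n) =>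
            (A i).image ⇑σ = A i ∧ (B i).image ⇑σ = B i) := by
        ext σ; simp only [mem_filter, mem_univ, true_and, f, Prod.ext_iff]
      rw [e1, e2]
      exact fib_eq (A i) (B i)
        ((mem_powersetCard_univ.mp h1).trans ha)
        ((mem_powersetCard_univ.mp h2).trans hb)
        hdisj (hd i)
        (exists_perm_image ((mem_powersetCard_univ.mp h1).trans ha)
          ((mem_powersetCard_univ.mp h2).trans hb) hdisj (hd i))
    set c := ((univ : Finset (Equiv.Perm (Fin n))).filter fun σ => f σ = (A i, B i)).card with hcdef
    have hNall : N = all.card * c := by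
      rw [hNdef, Finset.card_eq_sum_card_fiberwise (fun σ _ => hfall σ)]
      rw [Finset.sum_congr rfl (fun pq hpq => hfib pq hpq), Finset.sum_const, smul_eq_mul]
    have hEsrt : (E i).card = srt.card * c := by
      have hmap : ∀ σ ∈ E i, f σ ∈ srt := by
        intro σ hσ
        have hs := (mem_filter.mp hσ).2
        have := hfall σ
        obtain ⟨hmem, hdisj⟩ := mem_filter.mp this
        refine mem_filter.mpr ⟨hmem, hdisj, ?_⟩
        intro x hxm y hym
        obtain ⟨x', hx', rfl⟩ := mem_image.mp hxm
        obtain ⟨y', hy', rfl⟩ := mem_image.mp hym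
        exact hs x' hx' y' hy'
      rw [Finset.card_eq_sum_card_fiberwise hmap]
      have : ∀ pq ∈ srt, ((E i).filter fun σ => f σ = pq).card =
          ((univ : Finset (Equiv.Perm (Fin n))).filter fun σ => f σ = pq).card := by
        intro pq hpq
        congr 1
        ext σ
        simp only [mem_filter, mem_univ, true_and, E, and_iff_right_iff_imp]
        intro hfσ
        intro x hxm y hym
        have hsort := (mem_filter.mp hpq).2.2
        have : σ x ∈ pq.1 := hfσ ▸ mem_image_of_mem _ hxm
        have h2 : σ y ∈ pq.2 := hfσ ▸ mem_image_of_mem _ hym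
        exact hsort _ this _ h2
      rw [Finset.sum_congr rfl this,
        Finset.sum_congr rfl (fun pq hpq => hfib pq (by
          obtain ⟨hm, hdj, _⟩ := mem_filter.mp hpq
          exact mem_filter.mpr ⟨hm, hdj⟩)),
        Finset.sum_const, smul_eq_mul]
    have hs := sorted_pairs_bound n a b
    have hchoose : (a + b).choose a ≤ q.choose (q / 2) :=
      le_trans (Nat.choose_le_choose a (hc i)) (Nat.choose_le_middle a q)
    calc N = all.card * c := hNall
      _ ≤ (srt.card * (a + b).choose a) * c := Nat.mul_le_mul_right c hs
      _ = (srt.card * c) * (a + b).choose a := by ring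
      _ = (E i).card * (a + b).choose a := by rw [hEsrt]
      _ ≤ (E i).card * q.choose (q / 2) := Nat.mul_le_mul_left _ hchoose
  -- Step B: disjointness
  have stepB : ∀ i ∈ (univ : Finset (Fin K)), ∀ j ∈ univ, i ≠ j → Disjoint (E i) (E j) := by
    intro i _ j _ hij
    rw [Finset.disjoint_left]
    intro σ hσi hσj
    obtain ⟨x, hxm⟩ := hx i j hij
    obtain ⟨y, hym⟩ := hx j i hij.symm
    have h1 : σ x < σ y := (mem_filter.mp hσi).2 x (mem_inter.mp hxm).1 y (mem_inter.mp hym).2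
    have h2 : σ y < σ x := (mem_filter.mp hσj).2 y (mem_inter.mp hym).1 x (mem_inter.mp hxm).2
    exact lt_asymm h1 h2
  -- Step C: combine
  have hsum : ∑ i : Fin K, (E i).card ≤ N := by
    rw [← Finset.card_biUnion stepB]
    exact Finset.card_le_card (subset_univ _)
  have : K * N ≤ q.choose (q / 2) * N := by
    calc K * N = ∑ _i : Fin K, N := by rw [Finset.sum_const, card_univ, Fintype.card_fin, smul_eq_mul]
      _ ≤ ∑ i : Fin K, (E i).card * q.choose (q / 2) := Finset.sum_le_sum (fun i _ => stepA i)
      _ = (∑ i : Fin K, (E i).card) * q.choose (q / 2) := by rw [Finset.sum_mul]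
      _ ≤ N * q.choose (q / 2) := Nat.mul_le_mul_right _ hsum
      _ = q.choose (q / 2) * N := Nat.mul_comm _ _
  exact Nat.le_of_mul_le_mul_right this hN

/-- The Combinatorial Lemma: if `|U i| + |V i| ≤ q` for every `i` and
`U i ∩ V j ⊈ V i` for every `i ≠ j`, then `K ≤ C(q, ⌊q/2⌋)`. -/
theorem combinatorial_lemma {α : Type*} [DecidableEq α] (q K : ℕ)
    (U V : Fin K → Finset α)
    (hcard : ∀ i, (U i).card + (V i).card ≤ q)
    (hnsub : ∀ i j, i ≠ j → ¬ (U i ∩ V j ⊆ V i)) :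
    K ≤ q.choose (q / 2) := by
  classical
  open Finset in
  set s := (Finset.univ : Finset (Fin K)).biUnion (fun i => U i ∪ V i) with hs
  have hUs : ∀ i, U i ⊆ s := fun i x hx =>
    Finset.mem_biUnion.mpr ⟨i, Finset.mem_univ _, Finset.mem_union_left _ hx⟩
  have hVs : ∀ i, V i ⊆ s := fun i x hx =>
    Finset.mem_biUnion.mpr ⟨i, Finset.mem_univ _, Finset.mem_union_right _ hx⟩
  set n := s.card with hn
  let ι : {x // x ∈ s} ≃ Fin n := s.equivFin
  let F : Finset α → Finset (Fin n) := fun t => (t.subtype (· ∈ s)).image ι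
  have memF : ∀ (t : Finset α) (k : Fin n), k ∈ F t ↔ (ι.symm k : α) ∈ t := by
    intro t k
    simp only [F, Finset.mem_image, Finset.mem_subtype]
    constructor
    · rintro ⟨x, hx, rfl⟩; simpa using hx
    · intro h; exact ⟨ι.symm k, h, by simp⟩
  have cardF : ∀ t : Finset α, t ⊆ s → (F t).card = t.card := by
    intro t ht
    rw [show F t = (t.subtype (· ∈ s)).image ι from rfl,
      Finset.card_image_of_injective _ ι.injective]
    rw [Finset.card_subtype, Finset.filter_true_of_mem ht]
  refine core_lemma (fun i => F (U i \ V i)) (fun i => F (V i)) ?_ ?_ ?_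
  · intro i
    rw [Finset.disjoint_left]
    intro k hk hk'
    have h1 := (memF _ k).mp hk
    have h2 := (memF _ k).mp hk'
    exact (Finset.mem_sdiff.mp h1).2 h2
  · intro i
    rw [cardF _ (fun x hx => hUs i (Finset.mem_sdiff.mp hx).1), cardF _ (hVs i)]
    calc (U i \ V i).card + (V i).card ≤ (U i).card + (V i).card :=
          Nat.add_le_add_right (Finset.card_le_card Finset.sdiff_subset) _
      _ ≤ q := hcard i
  · intro i j hij
    obtain ⟨x, hxin, hxnot⟩ := Finset.not_subset.mp (hnsub i j hij)
    have hxU : x ∈ U i := (Finset.mem_inter.mp hxin).1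
    have hxVj : x ∈ V j := (Finset.mem_inter.mp hxin).2
    have hxs : x ∈ s := hUs i hxU
    refine ⟨ι ⟨x, hxs⟩, Finset.mem_inter.mpr ⟨?_, ?_⟩⟩
    · rw [memF]; simp only [Equiv.symm_apply_apply]
      exact Finset.mem_sdiff.mpr ⟨hxU, hxnot⟩
    · rw [memF]; simp only [Equiv.symm_apply_apply]
      exact hxVj
end

section
/- Bollobás's inequality: let U_1, ..., U_K and V_1, ..., V_K be finite subsets of some universe such that for all indices i, j one has U_i ∩ V_j = ∅ if and only if i = j. Then the sum over i from 1 to K of 1 / C(|U_i| + |V_i|, |V_i|) is at most 1. -/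
open Finset Function

namespace BollobasAux

set_option linter.unusedSectionVars false

variable {α : Type*} [DecidableEq α] {t W : Finset α}

/-- embedding of the subtype of `W` into positions, via `σ`. -/
def emb (hW : W ⊆ t) (σ : {x // x ∈ t} ≃ Fin t.card) (q : {x // x ∈ W}) : Fin t.card :=
  σ ⟨q.1, hW q.2⟩

lemma emb_inj (hW : W ⊆ t) (σ : {x // x ∈ t} ≃ Fin t.card) : Injective (emb hW σ) := by
  intro q q' h
  have := σ.injective h
  have h2 : (q.1 : α) = q'.1 := congrArg (fun z : {x // x ∈ t} => z.1) this
  exact Subtype.ext h2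

/-- the set of positions occupied by `W` under `σ`. -/
def pos (hW : W ⊆ t) (σ : {x // x ∈ t} ≃ Fin t.card) : Finset (Fin t.card) :=
  Finset.univ.image (emb hW σ)

lemma card_pos (hW : W ⊆ t) (σ : {x // x ∈ t} ≃ Fin t.card) : (pos hW σ).card = W.card := by
  rw [pos, Finset.card_image_of_injective _ (emb_inj hW σ), Finset.card_univ,
    Fintype.card_coe]

lemma mem_pos (hW : W ⊆ t) (σ : {x // x ∈ t} ≃ Fin t.card) (q : {x // x ∈ W}) :
    emb hW σ q ∈ pos hW σ := Finset.mem_image_of_mem _ (Finset.mem_univ q)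

/-- the order isomorphism enumerating the positions. -/
noncomputable def iso (hW : W ⊆ t) (σ : {x // x ∈ t} ≃ Fin t.card) :
    Fin W.card ≃o {y // y ∈ pos hW σ} :=
  (pos hW σ).orderIsoOfFin (card_pos hW σ)

/-- the relative order pattern of `W` induced by `σ`. -/
noncomputable def psi (hW : W ⊆ t) (σ : {x // x ∈ t} ≃ Fin t.card) :
    {x // x ∈ W} ≃ Fin W.card :=
  (Equiv.ofBijective (fun q => (⟨emb hW σ q, mem_pos hW σ q⟩ : {y // y ∈ pos hW σ}))
    (by
      rw [Fintype.bijective_iff_injective_and_card]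
      constructor
      · intro q q' h
        exact emb_inj hW σ (congrArg Subtype.val h)
      · simp [Fintype.card_coe, card_pos])).trans (iso hW σ).toEquiv.symm

lemma iso_psi (hW : W ⊆ t) (σ : {x // x ∈ t} ≃ Fin t.card) (q : {x // x ∈ W}) :
    ((iso hW σ) (psi hW σ q) : Fin t.card) = emb hW σ q := by
  simp [psi, Equiv.ofBijective]

lemma psi_spec (hW : W ⊆ t) (σ : {x // x ∈ t} ≃ Fin t.card) (q q' : {x // x ∈ W}) :
    emb hW σ q < emb hW σ q' ↔ psi hW σ q < psi hW σ q' := by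
  rw [← iso_psi hW σ q, ← iso_psi hW σ q']
  rw [Subtype.coe_lt_coe, (iso hW σ).lt_iff_lt]

lemma psi_unique (hW : W ⊆ t) (σ : {x // x ∈ t} ≃ Fin t.card)
    (ρ : {x // x ∈ W} ≃ Fin W.card)
    (hρ : ∀ q q', emb hW σ q < emb hW σ q' ↔ ρ q < ρ q') : ρ = psi hW σ := by
  have hsm : StrictMono ((psi hW σ).symm.trans ρ) := by
    intro k k' hk
    have := (hρ ((psi hW σ).symm k) ((psi hW σ).symm k')).mp
    simp only [Equiv.trans_apply]
    apply this
    rw [psi_spec hW σ]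
    simpa using hk
  let oi : Fin W.card ≃o Fin W.card :=
    { toEquiv := (psi hW σ).symm.trans ρ, map_rel_iff' := fun {a b} => hsm.le_iff_le }
  have hoi : oi = OrderIso.refl _ := Subsingleton.elim _ _
  apply Equiv.ext
  intro q
  have := congrArg (fun f => (f : Fin W.card ≃o Fin W.card) (psi hW σ q)) hoi
  simpa [oi] using this


lemma mem_pos_iff (hW : W ⊆ t) (σ : {x // x ∈ t} ≃ Fin t.card) (p : {x // x ∈ t}) :
    σ p ∈ pos hW σ ↔ p.1 ∈ W := by
  constructor
  · intro hp
    rw [pos, Finset.mem_image] at hp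
    obtain ⟨q, -, hq⟩ := hp
    have := σ.injective hq
    have h2 : (q.1 : α) = p.1 := congrArg (fun z : {x // x ∈ t} => z.1) this
    rw [← h2]; exact q.2
  · intro hp
    exact mem_pos hW σ ⟨p.1, hp⟩

lemma coe_iso_mem (hW : W ⊆ t) (σ : {x // x ∈ t} ≃ Fin t.card) (k : Fin W.card) :
    ((iso hW σ) k : Fin t.card) ∈ pos hW σ := ((iso hW σ) k).2

lemma mem_pos_iff' (hW : W ⊆ t) (σ : {x // x ∈ t} ≃ Fin t.card) (y : Fin t.card) :
    y ∈ pos hW σ ↔ ∃ k, ((iso hW σ) k : Fin t.card) = y := by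
  constructor
  · intro hy
    exact ⟨(iso hW σ).symm ⟨y, hy⟩, by simp⟩
  · rintro ⟨k, rfl⟩
    exact coe_iso_mem hW σ k

/-- rearrange `σ` so that its relative order pattern on `W` becomes `ρ'`. -/
noncomputable def twist (hW : W ⊆ t) (σ : {x // x ∈ t} ≃ Fin t.card)
    (ρ' : {x // x ∈ W} ≃ Fin W.card) : {x // x ∈ t} ≃ Fin t.card :=
  Equiv.ofBijective
    (fun p => if h : p.1 ∈ W then ((iso hW σ) (ρ' ⟨p.1, h⟩) : Fin t.card) else σ p)
    (by
      rw [Fintype.bijective_iff_injective_and_card]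
      refine ⟨?_, by simp [Fintype.card_coe]⟩
      intro p p' hpp
      by_cases h1 : p.1 ∈ W <;> by_cases h2 : p'.1 ∈ W <;>
        simp only [h1, h2, dif_pos, dif_neg, not_false_iff] at hpp
      · have := (iso hW σ).injective (Subtype.ext hpp)
        have := ρ'.injective this
        have h3 : (p.1 : α) = p'.1 := congrArg (fun z : {x // x ∈ W} => z.1) this
        exact Subtype.ext h3
      · exfalso
        apply h2
        rw [← mem_pos_iff hW σ p', ← hpp]
        exact coe_iso_mem hW σ _
      · exfalso
        apply h1
        rw [← mem_pos_iff hW σ p, hpp]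
        exact coe_iso_mem hW σ _
      · exact σ.injective hpp)

lemma twist_apply_mem (hW : W ⊆ t) (σ : {x // x ∈ t} ≃ Fin t.card)
    (ρ' : {x // x ∈ W} ≃ Fin W.card) (p : {x // x ∈ t}) (h : p.1 ∈ W) :
    twist hW σ ρ' p = ((iso hW σ) (ρ' ⟨p.1, h⟩) : Fin t.card) := by
  simp [twist, Equiv.ofBijective, h]

lemma twist_apply_not_mem (hW : W ⊆ t) (σ : {x // x ∈ t} ≃ Fin t.card)
    (ρ' : {x // x ∈ W} ≃ Fin W.card) (p : {x // x ∈ t}) (h : ¬ p.1 ∈ W) :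
    twist hW σ ρ' p = σ p := by
  simp [twist, Equiv.ofBijective, h]

lemma emb_twist (hW : W ⊆ t) (σ : {x // x ∈ t} ≃ Fin t.card)
    (ρ' : {x // x ∈ W} ≃ Fin W.card) (q : {x // x ∈ W}) :
    emb hW (twist hW σ ρ') q = ((iso hW σ) (ρ' q) : Fin t.card) := by
  rw [emb, twist_apply_mem hW σ ρ' _ q.2]

lemma psi_twist (hW : W ⊆ t) (σ : {x // x ∈ t} ≃ Fin t.card)
    (ρ' : {x // x ∈ W} ≃ Fin W.card) : psi hW (twist hW σ ρ') = ρ' := by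
  refine (psi_unique hW (twist hW σ ρ') ρ' ?_).symm
  intro q q'
  rw [emb_twist, emb_twist, Subtype.coe_lt_coe, (iso hW σ).lt_iff_lt]

lemma pos_twist (hW : W ⊆ t) (σ : {x // x ∈ t} ≃ Fin t.card)
    (ρ' : {x // x ∈ W} ≃ Fin W.card) : pos hW (twist hW σ ρ') = pos hW σ := by
  ext y
  rw [mem_pos_iff' hW σ, pos, Finset.mem_image]
  constructor
  · rintro ⟨q, -, hq⟩
    exact ⟨ρ' q, by rw [← emb_twist hW σ ρ' q, hq]⟩
  · rintro ⟨k, hk⟩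
    exact ⟨ρ'.symm k, Finset.mem_univ _, by rw [emb_twist]; simp [hk]⟩

lemma coe_iso_eq_of_pos_eq (hW : W ⊆ t) (σ₁ σ₂ : {x // x ∈ t} ≃ Fin t.card)
    (hpos : pos hW σ₁ = pos hW σ₂) (k : Fin W.card) :
    ((iso hW σ₁) k : Fin t.card) = ((iso hW σ₂) k : Fin t.card) := by
  have h1 : ∀ τ : {x // x ∈ t} ≃ Fin t.card, ∀ j : Fin W.card,
      ((iso hW τ) j : Fin t.card) = (pos hW τ).orderEmbOfFin (card_pos hW τ) j := by
    intro τ j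
    rw [iso, Finset.coe_orderIsoOfFin_apply]
  rw [h1, h1]
  have : (pos hW σ₂).orderEmbOfFin (card_pos hW σ₂)
      = (pos hW σ₁).orderEmbOfFin (card_pos hW σ₁) := by
    apply Finset.orderEmbOfFin_unique' (card_pos hW σ₁)
    intro x
    rw [hpos]
    exact Finset.orderEmbOfFin_mem _ _ _
  rw [this]

lemma twist_injective (hW : W ⊆ t) (ρ ρ' : {x // x ∈ W} ≃ Fin W.card)
    (σ₁ σ₂ : {x // x ∈ t} ≃ Fin t.card) (h₁ : psi hW σ₁ = ρ) (h₂ : psi hW σ₂ = ρ)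
    (heq : twist hW σ₁ ρ' = twist hW σ₂ ρ') : σ₁ = σ₂ := by
  have hpos : pos hW σ₁ = pos hW σ₂ := by
    rw [← pos_twist hW σ₁ ρ', ← pos_twist hW σ₂ ρ', heq]
  apply Equiv.ext
  intro p
  by_cases hp : p.1 ∈ W
  · have e1 : σ₁ p = emb hW σ₁ ⟨p.1, hp⟩ := by rw [emb]
    have e2 : σ₂ p = emb hW σ₂ ⟨p.1, hp⟩ := by rw [emb]
    rw [e1, e2, ← iso_psi hW σ₁, ← iso_psi hW σ₂, h₁, h₂]
    exact coe_iso_eq_of_pos_eq hW σ₁ σ₂ hpos _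
  · have h3 : twist hW σ₁ ρ' p = twist hW σ₂ ρ' p := by rw [heq]
    rwa [twist_apply_not_mem hW σ₁ ρ' p hp, twist_apply_not_mem hW σ₂ ρ' p hp] at h3


variable {U V : Finset α}

lemma card_ge_of_disjoint (hd : Disjoint U V) : (U ∪ V).card = U.card + V.card :=
  Finset.card_union_of_disjoint hd

/-- glue bijections on `U` and `V` into a "good" pattern on `U ∪ V`. -/
noncomputable def glue (hd : Disjoint U V)
    (f : {x // x ∈ U} ≃ Fin U.card) (g : {x // x ∈ V} ≃ Fin V.card) :
    {x // x ∈ U ∪ V} ≃ Fin (U ∪ V).card :=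
  Equiv.ofBijective
    (fun p => if h : p.1 ∈ U then
        (⟨(f ⟨p.1, h⟩ : Fin U.card).1, by
          have := (f ⟨p.1, h⟩).2
          rw [card_ge_of_disjoint hd]; omega⟩ : Fin (U ∪ V).card)
      else
        have hv : p.1 ∈ V := by
          rcases Finset.mem_union.mp p.2 with h' | h'
          · exact absurd h' h
          · exact h'
        ⟨U.card + (g ⟨p.1, hv⟩ : Fin V.card).1, by
          have := (g ⟨p.1, hv⟩).2
          rw [card_ge_of_disjoint hd]; omega⟩)
    (by
      rw [Fintype.bijective_iff_injective_and_card]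
      refine ⟨?_, by simp [Fintype.card_coe]⟩
      intro p p' hpp
      by_cases h1 : p.1 ∈ U <;> by_cases h2 : p'.1 ∈ U <;>
        simp only [h1, h2, dif_pos, dif_neg, not_false_iff, Fin.mk_eq_mk] at hpp
      · have := f.injective (Fin.ext hpp)
        have h3 : (p.1 : α) = p'.1 := congrArg (fun z : {x // x ∈ U} => z.1) this
        exact Subtype.ext h3
      · exfalso; have := (f ⟨p.1, h1⟩).2; omega
      · exfalso; have := (f ⟨p'.1, h2⟩).2; omega
      · have h4 := add_left_cancel hpp
        have := g.injective (Fin.ext h4)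
        have h3 : (p.1 : α) = p'.1 := congrArg (fun z : {x // x ∈ V} => z.1) this
        exact Subtype.ext h3)

lemma glue_apply_left (hd : Disjoint U V) (f : {x // x ∈ U} ≃ Fin U.card)
    (g : {x // x ∈ V} ≃ Fin V.card) (p : {x // x ∈ U ∪ V}) (h : p.1 ∈ U) :
    (glue hd f g p : ℕ) = (f ⟨p.1, h⟩ : Fin U.card).1 := by
  simp [glue, Equiv.ofBijective, h]

lemma glue_apply_right (hd : Disjoint U V) (f : {x // x ∈ U} ≃ Fin U.card)
    (g : {x // x ∈ V} ≃ Fin V.card) (p : {x // x ∈ U ∪ V}) (h : p.1 ∈ V) :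
    (glue hd f g p : ℕ) = U.card + (g ⟨p.1, h⟩ : Fin V.card).1 := by
  have h1 : ¬ p.1 ∈ U := fun hu => (Finset.disjoint_left.mp hd hu) h
  simp [glue, Equiv.ofBijective, h1]

lemma glue_good (hd : Disjoint U V) (f : {x // x ∈ U} ≃ Fin U.card)
    (g : {x // x ∈ V} ≃ Fin V.card) (p q : {x // x ∈ U ∪ V})
    (hp : p.1 ∈ U) (hq : q.1 ∈ V) : glue hd f g p < glue hd f g q := by
  rw [Fin.lt_iff_val_lt_val, glue_apply_left hd f g p hp, glue_apply_right hd f g q hq]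
  have := (f ⟨p.1, hp⟩).2
  omega

lemma glue_injective (hd : Disjoint U V) : Function.Injective2 (glue hd) := by
  intro f f' g g' heq
  constructor
  · apply Equiv.ext
    intro u
    have hu : (u.1 : α) ∈ U ∪ V := Finset.mem_union_left _ u.2
    have h1 : (glue hd f g ⟨u.1, hu⟩ : ℕ) = (glue hd f' g' ⟨u.1, hu⟩ : ℕ) := by rw [heq]
    rw [glue_apply_left hd f g _ u.2, glue_apply_left hd f' g' _ u.2] at h1
    exact Fin.ext h1
  · apply Equiv.ext
    intro v
    have hv : (v.1 : α) ∈ U ∪ V := Finset.mem_union_right _ v.2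
    have h1 : (glue hd f g ⟨v.1, hv⟩ : ℕ) = (glue hd f' g' ⟨v.1, hv⟩ : ℕ) := by rw [heq]
    rw [glue_apply_right hd f g _ v.2, glue_apply_right hd f' g' _ v.2] at h1
    exact Fin.ext (add_left_cancel h1)

lemma key (t U V : Finset α) (hU : U ⊆ t) (hV : V ⊆ t) (hd : Disjoint U V) :
    t.card.factorial ≤
      (Finset.univ.filter (fun σ : {x // x ∈ t} ≃ Fin t.card =>
          ∀ p q : {x // x ∈ t}, p.1 ∈ U → q.1 ∈ V → σ p < σ q)).card *
        ((U.card + V.card).choose V.card) := by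
  classical
  have hW : U ∪ V ⊆ t := Finset.union_subset hU hV
  have hm : (U ∪ V).card = U.card + V.card := card_ge_of_disjoint hd
  set m := (U ∪ V).card with hmdef
  -- good patterns
  set G : Finset ({x // x ∈ U ∪ V} ≃ Fin m) :=
    Finset.univ.filter (fun ρ => ∀ p q : {x // x ∈ U ∪ V}, p.1 ∈ U → q.1 ∈ V → ρ p < ρ q)
    with hGdef
  set S : Finset ({x // x ∈ t} ≃ Fin t.card) :=
    Finset.univ.filter (fun σ => ∀ p q : {x // x ∈ t}, p.1 ∈ U → q.1 ∈ V → σ p < σ q)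
    with hSdef
  -- step A : membership transfer
  have stepA : ∀ σ : {x // x ∈ t} ≃ Fin t.card,
      σ ∈ S ↔ psi hW σ ∈ G := by
    intro σ
    simp only [hSdef, hGdef, Finset.mem_filter, Finset.mem_univ, true_and]
    constructor
    · intro hσ p q hp hq
      rw [← psi_spec hW σ p q]
      exact hσ ⟨p.1, hW p.2⟩ ⟨q.1, hW q.2⟩ hp hq
    · intro hρ p q hp hq
      have hp' : p.1 ∈ U ∪ V := Finset.mem_union_left _ hp
      have hq' : q.1 ∈ U ∪ V := Finset.mem_union_right _ hq
      have h1 : emb hW σ ⟨p.1, hp'⟩ < emb hW σ ⟨q.1, hq'⟩ := by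
        rw [psi_spec hW σ]
        exact hρ _ _ hp hq
      have e1 : emb hW σ ⟨p.1, hp'⟩ = σ p := by rw [emb]
      have e2 : emb hW σ ⟨q.1, hq'⟩ = σ q := by rw [emb]
      rwa [e1, e2] at h1
  -- fibers
  set fib : ({x // x ∈ U ∪ V} ≃ Fin m) → ℕ :=
    fun ρ => (Finset.univ.filter (fun σ : {x // x ∈ t} ≃ Fin t.card => psi hW σ = ρ)).card
    with hfibdef
  have fible : ∀ ρ ρ', fib ρ ≤ fib ρ' := by
    intro ρ ρ'
    apply Finset.card_le_card_of_injOn (fun σ => twist hW σ ρ')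
    · intro σ hσ
      simp only [Finset.coe_filter, Finset.mem_filter, Finset.mem_univ, true_and] at hσ ⊢
      exact psi_twist hW σ ρ'
    · intro σ₁ h₁ σ₂ h₂ heq
      simp only [Finset.coe_filter, Finset.mem_univ, true_and, Set.mem_setOf_eq] at h₁ h₂
      exact twist_injective hW ρ ρ' σ₁ σ₂ h₁ h₂ heq
  obtain ⟨ρ₀⟩ : Nonempty ({x // x ∈ U ∪ V} ≃ Fin m) :=
    ⟨Fintype.equivFinOfCardEq (Fintype.card_coe _)⟩
  have fibeq : ∀ ρ, fib ρ = fib ρ₀ := fun ρ => le_antisymm (fible ρ ρ₀) (fible ρ₀ ρ)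
  -- total count
  have htot : t.card.factorial = m.factorial * fib ρ₀ := by
    have h1 : (Finset.univ : Finset ({x // x ∈ t} ≃ Fin t.card)).card
        = ∑ ρ : {x // x ∈ U ∪ V} ≃ Fin m,
            (Finset.univ.filter (fun σ => psi hW σ = ρ)).card :=
      Finset.card_eq_sum_card_fiberwise (fun σ _ => Finset.mem_univ (psi hW σ))
    have h2 : (Finset.univ : Finset ({x // x ∈ t} ≃ Fin t.card)).card = t.card.factorial := by
      rw [Finset.card_univ, Fintype.card_equiv (Fintype.equivFinOfCardEq (Fintype.card_coe _)),
        Fintype.card_coe]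
    have h3 : ∑ ρ : {x // x ∈ U ∪ V} ≃ Fin m,
        (Finset.univ.filter (fun σ : {x // x ∈ t} ≃ Fin t.card => psi hW σ = ρ)).card
        = m.factorial * fib ρ₀ := by
      rw [Finset.sum_congr rfl (fun ρ _ => fibeq ρ), Finset.sum_const, Finset.card_univ,
        Fintype.card_equiv (Fintype.equivFinOfCardEq (Fintype.card_coe _)),
        Fintype.card_coe, smul_eq_mul]
    rw [← h2, h1, h3]
  -- S count
  have hScard : S.card = G.card * fib ρ₀ := by
    have h1 : S.card = ∑ ρ ∈ G, (S.filter (fun σ => psi hW σ = ρ)).card :=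
      Finset.card_eq_sum_card_fiberwise (fun σ hσ => (stepA σ).mp hσ)
    have h2 : ∀ ρ ∈ G, (S.filter (fun σ => psi hW σ = ρ)).card = fib ρ₀ := by
      intro ρ hρ
      rw [← fibeq ρ, hfibdef]
      congr 1
      ext σ
      simp only [Finset.mem_filter, Finset.mem_univ, true_and, and_iff_right_iff_imp, hSdef]
      intro hpsi
      have := (stepA σ).mpr (by rw [hpsi]; exact hρ)
      rw [hSdef, Finset.mem_filter] at this
      exact this.2
    rw [h1, Finset.sum_congr rfl h2, Finset.sum_const, smul_eq_mul]
  -- G count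
  have hGcard : U.card.factorial * V.card.factorial ≤ G.card := by
    have h1 : Fintype.card (({x // x ∈ U} ≃ Fin U.card) × ({x // x ∈ V} ≃ Fin V.card))
        = U.card.factorial * V.card.factorial := by
      rw [Fintype.card_prod,
        Fintype.card_equiv (Fintype.equivFinOfCardEq (Fintype.card_coe _)),
        Fintype.card_equiv (Fintype.equivFinOfCardEq (Fintype.card_coe _)),
        Fintype.card_coe, Fintype.card_coe]
    rw [← h1, ← Finset.card_univ]
    apply Finset.card_le_card_of_injOn (fun fg => glue hd fg.1 fg.2)
    · intro fg _
      simp only [hGdef, Finset.coe_filter, Finset.mem_filter, Finset.mem_univ, true_and]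
      intro p q hp hq
      exact glue_good hd fg.1 fg.2 p q hp hq
    · intro fg _ fg' _ heq
      obtain ⟨e1, e2⟩ := glue_injective hd heq
      exact Prod.ext e1 e2
  -- arithmetic
  have harith : (U.card + V.card).choose V.card * V.card.factorial * U.card.factorial
      = (U.card + V.card).factorial := by
    have := Nat.choose_mul_factorial_mul_factorial (Nat.le_add_left V.card U.card)
    simpa [Nat.add_sub_cancel] using this
  calc t.card.factorial = m.factorial * fib ρ₀ := htot
    _ = (U.card + V.card).factorial * fib ρ₀ := by rw [← hm]
    _ = (U.card + V.card).choose V.card * V.card.factorial * U.card.factorial * fib ρ₀ := by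
        rw [harith]
    _ = (U.card.factorial * V.card.factorial) * fib ρ₀ * (U.card + V.card).choose V.card := by
        ring
    _ ≤ G.card * fib ρ₀ * (U.card + V.card).choose V.card := by
        apply Nat.mul_le_mul_right
        exact Nat.mul_le_mul_right _ hGcard
    _ = S.card * (U.card + V.card).choose V.card := by rw [hScard]

end BollobasAux

/-- Bollobás's inequality. -/
theorem bollobas_inequality {α : Type*} [DecidableEq α] (K : ℕ)
    (U V : Fin K → Finset α)
    (h : ∀ i j, U i ∩ V j = ∅ ↔ i = j) :
    ∑ i, (1 : ℝ) / (((U i).card + (V i).card).choose (V i).card : ℝ) ≤ 1 := by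
  classical
  set t : Finset α := Finset.univ.biUnion (fun i => U i ∪ V i) with ht
  have hUVt : ∀ i, U i ∪ V i ⊆ t := fun i =>
    Finset.subset_biUnion_of_mem (fun i => U i ∪ V i) (Finset.mem_univ i)
  have hUt : ∀ i, U i ⊆ t := fun i => (Finset.subset_union_left).trans (hUVt i)
  have hVt : ∀ i, V i ⊆ t := fun i => (Finset.subset_union_right).trans (hUVt i)
  have hd : ∀ i, Disjoint (U i) (V i) := fun i =>
    Finset.disjoint_iff_inter_eq_empty.mpr ((h i i).mpr rfl)
  set S : Fin K → Finset ({x // x ∈ t} ≃ Fin t.card) :=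
    fun i => Finset.univ.filter (fun σ => ∀ p q : {x // x ∈ t},
      p.1 ∈ U i → q.1 ∈ V i → σ p < σ q) with hSdef
  have key : ∀ i, t.card.factorial ≤
      (S i).card * (((U i).card + (V i).card).choose (V i).card) := fun i =>
    BollobasAux.key t (U i) (V i) (hUt i) (hVt i) (hd i)
  have hdisj : ∀ i ∈ Finset.univ, ∀ j ∈ Finset.univ, i ≠ j → Disjoint (S i) (S j) := by
    intro i _ j _ hij
    rw [Finset.disjoint_left]
    intro σ hσi hσj
    simp only [hSdef, Finset.mem_filter, Finset.mem_univ, true_and] at hσi hσj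
    have hx : (U i ∩ V j).Nonempty := by
      rw [Finset.nonempty_iff_ne_empty]
      exact fun he => hij ((h i j).mp he)
    have hy : (U j ∩ V i).Nonempty := by
      rw [Finset.nonempty_iff_ne_empty]
      exact fun he => (hij.symm) ((h j i).mp he)
    obtain ⟨x, hx⟩ := hx
    obtain ⟨y, hy⟩ := hy
    rw [Finset.mem_inter] at hx hy
    have hxt : x ∈ t := hUt i hx.1
    have hyt : y ∈ t := hUt j hy.1
    have h1 : σ ⟨x, hxt⟩ < σ ⟨y, hyt⟩ := hσi ⟨x, hxt⟩ ⟨y, hyt⟩ hx.1 hy.2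
    have h2 : σ ⟨y, hyt⟩ < σ ⟨x, hxt⟩ := hσj ⟨y, hyt⟩ ⟨x, hxt⟩ hy.1 hx.2
    exact lt_asymm h1 h2
  have hsum : ∑ i, (S i).card ≤ t.card.factorial := by
    calc ∑ i, (S i).card = (Finset.univ.biUnion S).card := (Finset.card_biUnion hdisj).symm
      _ ≤ (Finset.univ : Finset ({x // x ∈ t} ≃ Fin t.card)).card :=
          Finset.card_le_card (Finset.subset_univ _)
      _ = t.card.factorial := by
          rw [Finset.card_univ,
            Fintype.card_equiv (Fintype.equivFinOfCardEq (Fintype.card_coe _)),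
            Fintype.card_coe]
  have hn : (0:ℝ) < (t.card.factorial : ℝ) := by exact_mod_cast Nat.factorial_pos _
  have step : ∀ i, (1 : ℝ) / (((U i).card + (V i).card).choose (V i).card : ℝ)
      ≤ ((S i).card : ℝ) / (t.card.factorial : ℝ) := by
    intro i
    have hC : (0:ℝ) < ((((U i).card + (V i).card).choose (V i).card : ℕ) : ℝ) := by
      exact_mod_cast Nat.choose_pos (Nat.le_add_left _ _)
    rw [div_le_div_iff₀ hC hn, one_mul]
    exact_mod_cast key i
  calc ∑ i, (1 : ℝ) / (((U i).card + (V i).card).choose (V i).card : ℝ)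
      ≤ ∑ i, ((S i).card : ℝ) / (t.card.factorial : ℝ) := Finset.sum_le_sum (fun i _ => step i)
    _ = (∑ i, ((S i).card:ℕ) : ℕ) / (t.card.factorial : ℝ) := by
        rw [← Finset.sum_div]
        push_cast
        ring
    _ ≤ 1 := by
        rw [div_le_one hn]
        exact_mod_cast hsum
end

section
/- Let n and q be natural numbers and let U and V be disjoint finite subsets of Fin n with |U| + |V| ≤ q. For a uniformly random permutation σ of Fin n, the probability that σ(x) < σ(y) for every x ∈ U and every y ∈ V equals 1 / C(|U| + |V|, |V|), and this probability is at least 1 / C(q, ⌊q/2⌋). -/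
open Finset

/-- There is a permutation mapping `A` onto `A'` and `B` onto `B'`. -/
lemma exists_perm_map {n : ℕ} (A B A' B' : Finset (Fin n))
    (hAB : Disjoint A B) (hA'B' : Disjoint A' B')
    (h1 : A.card = A'.card) (h2 : B.card = B'.card) :
    ∃ π : Equiv.Perm (Fin n),
      (∀ x ∈ A, π x ∈ A') ∧ (∀ x ∈ B, π x ∈ B') ∧
      (∀ x ∈ A', π.symm x ∈ A) ∧ (∀ x ∈ B', π.symm x ∈ B) := by
  have hC : ((A ∪ B)ᶜ).card = ((A' ∪ B')ᶜ).card := by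
    rw [Finset.card_compl, Finset.card_compl,
      Finset.card_union_of_disjoint hAB, Finset.card_union_of_disjoint hA'B', h1, h2]
  let e1 := Finset.equivOfCardEq h1
  let e2 := Finset.equivOfCardEq h2
  let e3 := Finset.equivOfCardEq hC
  let f : Fin n → Fin n := fun x =>
    if h : x ∈ A then (e1 ⟨x, h⟩ : Fin n)
    else if h2 : x ∈ B then (e2 ⟨x, h2⟩ : Fin n)
    else (e3 ⟨x, by simp [Finset.mem_compl, Finset.mem_union, h, h2]⟩ : Fin n)
  have hfA : ∀ x (h : x ∈ A), f x ∈ A' := fun x h => by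
    simp only [f, dif_pos h]; exact (e1 ⟨x, h⟩).2
  have hfB : ∀ x (hx : x ∉ A) (h : x ∈ B), f x ∈ B' := fun x hx h => by
    simp only [f, dif_neg hx, dif_pos h]; exact (e2 ⟨x, h⟩).2
  have hfC : ∀ x (hx : x ∉ A) (hx2 : x ∉ B), f x ∈ (A' ∪ B')ᶜ := fun x hx hx2 => by
    simp only [f, dif_neg hx, dif_neg hx2]; exact (e3 _).2
  have hdisj1 : ∀ z : Fin n, z ∈ A' → z ∈ B' → False := fun z h h' =>
    Finset.disjoint_left.mp hA'B' h h'
  have hdisjC : ∀ z : Fin n, z ∈ (A' ∪ B')ᶜ → z ∈ A' ∨ z ∈ B' → False := fun z h h' => by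
    rw [Finset.mem_compl, Finset.mem_union] at h; exact h h'
  have hinj : Function.Injective f := by
    intro x y hxy
    by_cases hxA : x ∈ A <;> by_cases hyA : y ∈ A
    · have hx' : f x = (e1 ⟨x, hxA⟩ : Fin n) := dif_pos hxA
      have hy' : f y = (e1 ⟨y, hyA⟩ : Fin n) := dif_pos hyA
      have : e1 ⟨x, hxA⟩ = e1 ⟨y, hyA⟩ := Subtype.ext (by rw [← hx', ← hy', hxy])
      exact congrArg Subtype.val (e1.injective this)
    · exfalso
      by_cases hyB : y ∈ B
      · exact hdisj1 (f x) (hfA x hxA) (hxy ▸ hfB y hyA hyB)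
      · exact hdisjC (f y) (hfC y hyA hyB) (Or.inl (hxy ▸ hfA x hxA))
    · exfalso
      by_cases hxB : x ∈ B
      · exact hdisj1 (f y) (hfA y hyA) (hxy ▸ hfB x hxA hxB)
      · exact hdisjC (f x) (hfC x hxA hxB) (Or.inl (hxy.symm ▸ hfA y hyA))
    · by_cases hxB : x ∈ B <;> by_cases hyB : y ∈ B
      · have hx' : f x = (e2 ⟨x, hxB⟩ : Fin n) := by
          simp only [f, dif_neg hxA, dif_pos hxB]
        have hy' : f y = (e2 ⟨y, hyB⟩ : Fin n) := by
          simp only [f, dif_neg hyA, dif_pos hyB]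
        have : e2 ⟨x, hxB⟩ = e2 ⟨y, hyB⟩ := Subtype.ext (by rw [← hx', ← hy', hxy])
        exact congrArg Subtype.val (e2.injective this)
      · exact absurd (Or.inr (hxy.symm ▸ hfB x hxA hxB))
          (fun h => hdisjC (f y) (hfC y hyA hyB) h)
      · exact absurd (Or.inr (hxy ▸ hfB y hyA hyB))
          (fun h => hdisjC (f x) (hfC x hxA hxB) h)
      · have hx' : f x = (e3 ⟨x, by simp [Finset.mem_compl, Finset.mem_union, hxA, hxB]⟩ : Fin n) := by
          simp only [f, dif_neg hxA, dif_neg hxB]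
        have hy' : f y = (e3 ⟨y, by simp [Finset.mem_compl, Finset.mem_union, hyA, hyB]⟩ : Fin n) := by
          simp only [f, dif_neg hyA, dif_neg hyB]
        have : e3 ⟨x, _⟩ = e3 ⟨y, _⟩ := Subtype.ext (by rw [← hx', ← hy', hxy])
        exact congrArg Subtype.val (e3.injective this)
  let π : Equiv.Perm (Fin n) := Equiv.ofBijective f (Finite.injective_iff_bijective.mp hinj)
  have hπ : ∀ x, π x = f x := fun x => rfl
  have hA'mem : ∀ x ∈ A, π x ∈ A' := fun x h => by rw [hπ]; exact hfA x h
  have hB'mem : ∀ x ∈ B, π x ∈ B' := fun x h => by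
    rw [hπ]; exact hfB x (Finset.disjoint_right.mp hAB h) h
  refine ⟨π, hA'mem, hB'mem, ?_, ?_⟩
  · intro x hx
    by_contra hyA
    have hy : π (π.symm x) = x := π.apply_symm_apply x
    by_cases hyB : π.symm x ∈ B
    · exact hdisj1 x hx (hy ▸ hB'mem _ hyB)
    · refine hdisjC x ?_ (Or.inl hx)
      rw [← hy, hπ]; exact hfC _ hyA hyB
  · intro x hx
    by_contra hyB
    have hy : π (π.symm x) = x := π.apply_symm_apply x
    by_cases hyA : π.symm x ∈ A
    · exact hdisj1 x (hy ▸ hA'mem _ hyA) hx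
    · refine hdisjC x ?_ (Or.inr hx)
      rw [← hy, hπ]; exact hfC _ hyA hyB

lemma count_good {n : ℕ} (U V : Finset (Fin n)) (hUV : Disjoint U V) :
    (Finset.univ.filter (fun σ : Equiv.Perm (Fin n) =>
        ∀ x ∈ U, ∀ y ∈ V, σ x < σ y)).card * (U.card + V.card).choose V.card
      = n.factorial := by
  classical
  set u := U.card with hu
  set v := V.card with hv
  set S := U ∪ V with hSdef
  have hS : S.card = u + v := Finset.card_union_of_disjoint hUV
  -- rank of x within S
  set R : Equiv.Perm (Fin n) → Fin n → ℕ :=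
    fun σ x => (S.filter (fun y => σ y < σ x)).card with hR
  have hrank_strict : ∀ (σ : Equiv.Perm (Fin n)) x y, x ∈ S → y ∈ S →
      σ x < σ y → R σ x < R σ y := by
    intro σ x y hx hy hxy
    apply Finset.card_lt_card
    constructor
    · intro z hz
      rw [Finset.mem_filter] at hz ⊢
      exact ⟨hz.1, hz.2.trans hxy⟩
    · intro hsub
      have hxmem : x ∈ S.filter (fun y' => σ y' < σ y) := by
        rw [Finset.mem_filter]; exact ⟨hx, hxy⟩
      have := hsub hxmem
      rw [Finset.mem_filter] at this
      exact absurd this.2 (lt_irrefl _)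
  have hrank_injOn : ∀ σ : Equiv.Perm (Fin n), Set.InjOn (R σ) ↑S := by
    intro σ x hx y hy hxy
    by_contra hne
    rcases lt_or_gt_of_ne (fun h : σ x = σ y => hne (σ.injective h)) with h | h
    · exact absurd hxy (Nat.ne_of_lt (hrank_strict σ x y hx hy h))
    · exact absurd hxy.symm (Nat.ne_of_lt (hrank_strict σ y x hy hx h))
  have hrank_lt : ∀ (σ : Equiv.Perm (Fin n)) x, x ∈ S → R σ x < u + v := by
    intro σ x hx
    have : S.filter (fun y => σ y < σ x) ⊆ S.erase x := by
      intro z hz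
      rw [Finset.mem_filter] at hz
      rw [Finset.mem_erase]
      refine ⟨fun h => ?_, hz.1⟩
      subst h; exact absurd hz.2 (lt_irrefl _)
    calc R σ x ≤ (S.erase x).card := Finset.card_le_card this
      _ < S.card := Finset.card_erase_lt_of_mem hx
      _ = u + v := hS
  have himage : ∀ σ : Equiv.Perm (Fin n), S.image (R σ) = Finset.range (u + v) := by
    intro σ
    apply Finset.eq_of_subset_of_card_le
    · intro j hj
      rw [Finset.mem_image] at hj
      obtain ⟨x, hx, rfl⟩ := hj
      rw [Finset.mem_range]
      exact hrank_lt σ x hx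
    · rw [Finset.card_range, Finset.card_image_of_injOn (hrank_injOn σ), hS]
  -- the set of "top v" elements
  set Wf : Equiv.Perm (Fin n) → Finset (Fin n) :=
    fun σ => S.filter (fun x => u ≤ R σ x) with hWf
  have hWsub : ∀ σ, Wf σ ⊆ S := fun σ => Finset.filter_subset _ _
  have hWcard : ∀ σ, (Wf σ).card = v := by
    intro σ
    have h1 : (Wf σ).card = ((Wf σ).image (R σ)).card :=
      (Finset.card_image_of_injOn ((hrank_injOn σ).mono (by
        intro x hx; exact hWsub σ hx))).symm
    rw [h1]
    have h2 : (Wf σ).image (R σ) = (S.image (R σ)).filter (fun j => u ≤ j) := by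
      rw [Finset.filter_image]
    rw [h2, himage]
    have : (Finset.range (u + v)).filter (fun j => u ≤ j) = Finset.Ico u (u + v) := by
      ext j
      simp [Finset.mem_filter, Finset.mem_range, Finset.mem_Ico, and_comm]
    rw [this, Nat.card_Ico, Nat.add_sub_cancel_left]
  have hgoodW : ∀ (σ : Equiv.Perm (Fin n)) x y, x ∈ S \ Wf σ → y ∈ Wf σ → σ x < σ y := by
    intro σ x y hx hy
    rw [Finset.mem_sdiff] at hx
    have hxS := hx.1
    have hxr : ¬ u ≤ R σ x := by
      intro h
      exact hx.2 (Finset.mem_filter.mpr ⟨hxS, h⟩)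
    rw [Finset.mem_filter] at hy
    rcases lt_trichotomy (σ x) (σ y) with h | h | h
    · exact h
    · exact absurd (σ.injective h) (by rintro rfl; exact hxr hy.2)
    · exact absurd ((hrank_strict σ y x hy.1 hxS h).trans_le (le_of_not_ge hxr))
        (by omega)
  -- uniqueness: a W making σ sorted is unique
  have huniq : ∀ (σ : Equiv.Perm (Fin n)) (W : Finset (Fin n)), W ⊆ S → W.card = v →
      (∀ x ∈ S \ W, ∀ y ∈ W, σ x < σ y) → W = Wf σ := by
    intro σ W hWS hWc hgood
    by_contra hne
    have h1 : (W \ Wf σ).Nonempty := by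
      rw [Finset.sdiff_nonempty]
      intro hsub
      exact hne (Finset.eq_of_subset_of_card_le hsub (by rw [hWcard, hWc]))
    have h2 : (Wf σ \ W).Nonempty := by
      rw [Finset.sdiff_nonempty]
      intro hsub
      exact hne ((Finset.eq_of_subset_of_card_le hsub (by rw [hWcard, hWc])).symm)
    obtain ⟨x, hx⟩ := h1
    obtain ⟨y, hy⟩ := h2
    rw [Finset.mem_sdiff] at hx hy
    have hxy : σ y < σ x := hgood y (Finset.mem_sdiff.mpr ⟨hWsub σ hy.1, hy.2⟩) x hx.1
    have hyx : σ x < σ y := hgoodW σ x y (Finset.mem_sdiff.mpr ⟨hWS hx.1, hx.2⟩) hy.1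
    exact absurd (hxy.trans hyx) (lt_irrefl _)
  -- fiberwise counting
  have hfib : (Finset.univ : Finset (Equiv.Perm (Fin n))).card
      = ∑ W ∈ S.powersetCard v, (Finset.univ.filter (fun σ => Wf σ = W)).card := by
    apply Finset.card_eq_sum_card_fiberwise
    intro σ _
    rw [Finset.mem_coe, Finset.mem_powersetCard]
    exact ⟨hWsub σ, hWcard σ⟩
  -- each fiber has the same cardinality as the good set
  have hfiber_eq : ∀ W ∈ S.powersetCard v,
      (Finset.univ.filter (fun σ : Equiv.Perm (Fin n) => Wf σ = W)).card
        = (Finset.univ.filter (fun σ : Equiv.Perm (Fin n) =>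
            ∀ x ∈ U, ∀ y ∈ V, σ x < σ y)).card := by
    intro W hW
    rw [Finset.mem_powersetCard] at hW
    obtain ⟨hWS, hWc⟩ := hW
    have hfil : Finset.univ.filter (fun σ : Equiv.Perm (Fin n) => Wf σ = W)
        = Finset.univ.filter (fun σ : Equiv.Perm (Fin n) =>
            ∀ x ∈ S \ W, ∀ y ∈ W, σ x < σ y) := by
      ext σ
      simp only [Finset.mem_filter, Finset.mem_univ, true_and]
      constructor
      · rintro rfl
        exact fun x hx y hy => hgoodW σ x y hx hy
      · intro h
        exact (huniq σ W hWS hWc h).symm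
    rw [hfil]
    -- build the transporting permutation
    have hcard1 : (S \ W).card = U.card := by
      rw [Finset.card_sdiff_of_subset hWS, hS, hWc, hu, Nat.add_sub_cancel]
    have hcard2 : W.card = V.card := hWc
    obtain ⟨π, hπ1, hπ2, hπ3, hπ4⟩ := exists_perm_map (S \ W) W U V
      Finset.sdiff_disjoint hUV hcard1 hcard2
    apply Finset.card_bij' (fun σ _ => σ * π⁻¹) (fun σ _ => σ * π)
    · intro σ hσ
      rw [Finset.mem_filter] at hσ ⊢
      refine ⟨Finset.mem_univ _, fun x hx y hy => ?_⟩
      have h1 : (σ * π⁻¹) x = σ (π.symm x) := rfl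
      have h2 : (σ * π⁻¹) y = σ (π.symm y) := rfl
      rw [h1, h2]
      exact hσ.2 _ (hπ3 x hx) _ (hπ4 y hy)
    · intro σ hσ
      rw [Finset.mem_filter] at hσ ⊢
      refine ⟨Finset.mem_univ _, fun x hx y hy => ?_⟩
      have h1 : (σ * π) x = σ (π x) := rfl
      have h2 : (σ * π) y = σ (π y) := rfl
      rw [h1, h2]
      exact hσ.2 _ (hπ1 x hx) _ (hπ2 y hy)
    · intro σ _; group
    · intro σ _; group
  -- put it together
  have hsum : (Finset.univ : Finset (Equiv.Perm (Fin n))).card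
      = (u + v).choose v * (Finset.univ.filter (fun σ : Equiv.Perm (Fin n) =>
          ∀ x ∈ U, ∀ y ∈ V, σ x < σ y)).card := by
    rw [hfib, Finset.sum_congr rfl hfiber_eq, Finset.sum_const,
      Finset.card_powersetCard, hS, smul_eq_mul]
  have hcardperm : (Finset.univ : Finset (Equiv.Perm (Fin n))).card = n.factorial := by
    rw [Finset.card_univ, Fintype.card_perm, Fintype.card_fin]
  rw [← hcardperm, hsum, Nat.mul_comm]

/-- For a uniformly random permutation of `Fin n`, the probability that all of `U`
comes before all of `V` equals `1 / C(|U|+|V|, |V|)`, which is at least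
`1 / C(q, ⌊q/2⌋)` when `|U| + |V| ≤ q`. -/
theorem prob_U_before_V (n q : ℕ) (U V : Finset (Fin n))
    (hUV : Disjoint U V) (hq : U.card + V.card ≤ q) :
    ((Finset.univ.filter (fun σ : Equiv.Perm (Fin n) =>
        ∀ x ∈ U, ∀ y ∈ V, σ x < σ y)).card : ℝ) / (n.factorial : ℝ) =
      1 / (((U.card + V.card).choose V.card : ℕ) : ℝ) ∧
    (1 : ℝ) / (((U.card + V.card).choose V.card : ℕ) : ℝ) ≥
      1 / ((q.choose (q / 2) : ℕ) : ℝ) := by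
  have hkey := count_good U V hUV
  have hchoose_pos : 0 < (U.card + V.card).choose V.card :=
    Nat.choose_pos (Nat.le_add_left _ _)
  have hfac_pos : 0 < n.factorial := Nat.factorial_pos n
  constructor
  · rw [div_eq_div_iff (by exact_mod_cast hfac_pos.ne') (by exact_mod_cast hchoose_pos.ne')]
    rw [one_mul]
    exact_mod_cast hkey
  · have hle : (U.card + V.card).choose V.card ≤ q.choose (q / 2) :=
      le_trans (Nat.choose_le_choose V.card hq) (Nat.choose_le_middle V.card q)
    apply ge_iff_le.mpr
    apply one_div_le_one_div_of_le (by exact_mod_cast hchoose_pos)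
    exact_mod_cast hle
end

section
/- Let N and q be natural numbers and let U_1, ..., U_N and V_1, ..., V_N be finite subsets of some universe with |U_i| + |V_i| ≤ q for every i. Then the number of indices i ∈ {1, ..., N} such that for every j ≠ i the set U_i ∩ V_j is not a subset of V_i is at most C(q, ⌊q/2⌋). Consequently, for at least N − C(q, ⌊q/2⌋) of the indices i there exists some j ≠ i with U_i ∩ V_j ⊆ V_i. -/
namespace UIB
open Finset Equiv

variable {c a : ℕ}

def sortEquiv (hac : a ≤ c) (T : Finset (Fin c)) (hT : T.card = a) (hTc : Tᶜ.card = c - a) :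
    Fin c ≃ Fin c :=
  (Equiv.sumCompl (· ∈ T)).symm.trans
    ((Equiv.sumCongr (T.orderIsoOfFin hT).toEquiv.symm
        ((Equiv.subtypeEquivRight (fun x => (Finset.mem_compl).symm)).trans
          ((Tᶜ).orderIsoOfFin hTc).toEquiv.symm)).trans
      (finSumFinEquiv.trans (finCongr (Nat.add_sub_cancel' hac))))

lemma sortEquiv_lt (hac : a ≤ c) (T : Finset (Fin c)) (hT : T.card = a) (hTc : Tᶜ.card = c - a)
    {p : Fin c} (hp : p ∈ T) : (sortEquiv hac T hT hTc p : ℕ) < a := by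
  simp only [sortEquiv, Equiv.trans_apply, Equiv.sumCompl_symm_apply_of_pos hp,
    Equiv.sumCongr_apply, Sum.map_inl, finSumFinEquiv_apply_left, finCongr_apply]
  simpa using ((T.orderIsoOfFin hT).toEquiv.symm ⟨p, hp⟩).isLt

lemma sortEquiv_ge (hac : a ≤ c) (T : Finset (Fin c)) (hT : T.card = a) (hTc : Tᶜ.card = c - a)
    {p : Fin c} (hp : p ∉ T) : a ≤ (sortEquiv hac T hT hTc p : ℕ) := by
  simp only [sortEquiv, Equiv.trans_apply, Equiv.sumCompl_symm_apply_of_neg hp,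
    Equiv.sumCongr_apply, Sum.map_inr, finSumFinEquiv_apply_right, finCongr_apply]
  simp [Fin.natAdd]

variable {n : ℕ}

def buildPerm (hac : a ≤ c) (K : Finset (Fin n)) (hK : K.card = c)
    (T : Finset (Fin c)) (hT : T.card = a) (hTc : Tᶜ.card = c - a) : Equiv.Perm (Fin n) :=
  Equiv.Perm.extendDomain
    (((K.orderIsoOfFin hK).toEquiv.symm.trans (sortEquiv hac T hT hTc)).trans
      (K.orderIsoOfFin hK).toEquiv)
    (Equiv.refl {x // x ∈ K})

lemma buildPerm_apply_mem (hac : a ≤ c) (K : Finset (Fin n)) (hK : K.card = c)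
    (T : Finset (Fin c)) (hT : T.card = a) (hTc : Tᶜ.card = c - a) {k : Fin n} (hk : k ∈ K) :
    buildPerm hac K hK T hT hTc k =
      ((K.orderIsoOfFin hK) (sortEquiv hac T hT hTc ((K.orderIsoOfFin hK).symm ⟨k, hk⟩)) : Fin n) := by
  rw [buildPerm, Equiv.Perm.extendDomain_apply_subtype _ _ hk]
  rfl

lemma buildPerm_image (hac : a ≤ c) (K : Finset (Fin n)) (hK : K.card = c)
    (T : Finset (Fin c)) (hT : T.card = a) (hTc : Tᶜ.card = c - a) :
    K.image (buildPerm hac K hK T hT hTc) = K := by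
  apply Finset.eq_of_subset_of_card_le
  · intro x hx
    simp only [Finset.mem_image] at hx
    obtain ⟨k, hk, rfl⟩ := hx
    rw [buildPerm_apply_mem hac K hK T hT hTc hk]
    exact Finset.coe_mem _
  · rw [Finset.card_image_of_injective _ (Equiv.injective _)]

lemma buildPerm_congr {K K' : Finset (Fin n)} {T T' : Finset (Fin c)}
    (hac : a ≤ c) (hK : K.card = c) (hT : T.card = a) (hTc : Tᶜ.card = c - a)
    (hK' : K'.card = c) (hT' : T'.card = a) (hTc' : T'ᶜ.card = c - a)
    (h1 : K = K') (h2 : T = T') :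
    buildPerm hac K hK T hT hTc = buildPerm hac K' hK' T' hT' hTc' := by
  subst h1; subst h2; rfl

section Count
variable {β : Type*} [Fintype β] [DecidableEq β]
variable (A B : Finset β) (τ : β ≃ Fin (Fintype.card β))

def KK : Finset (Fin (Fintype.card β)) := (A ∪ B).image τ

lemma KK_card (hd : Disjoint A B) : (KK A B τ).card = A.card + B.card := by
  rw [KK, Finset.card_image_of_injective _ τ.injective, Finset.card_union_of_disjoint hd]

lemma mem_KK {x : β} (hx : x ∈ A ∪ B) : τ x ∈ KK A B τ :=
  Finset.mem_image_of_mem _ hx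

variable (hd : Disjoint A B)

def TT : Finset (Fin (A.card + B.card)) :=
  Finset.univ.filter
    (fun p => τ.symm ((KK A B τ).orderIsoOfFin (KK_card A B τ hd) p : Fin _) ∈ A)

lemma mem_TT {x : β} (hx : x ∈ A ∪ B) :
    ((KK A B τ).orderIsoOfFin (KK_card A B τ hd)).symm ⟨τ x, mem_KK A B τ hx⟩ ∈ TT A B τ hd
      ↔ x ∈ A := by
  rw [TT, Finset.mem_filter]
  simp only [Finset.mem_univ, true_and]
  rw [OrderIso.apply_symm_apply]
  simp

lemma TT_card : (TT A B τ hd).card = A.card := by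
  apply Finset.card_bij
    (i := fun p _ => τ.symm ((KK A B τ).orderIsoOfFin (KK_card A B τ hd) p : Fin _))
  · intro p hp
    simp only [TT, Finset.mem_filter] at hp
    exact hp.2
  · intro p1 h1 p2 h2 h
    exact ((KK A B τ).orderIsoOfFin (KK_card A B τ hd)).injective
      (Subtype.ext (τ.symm.injective h))
  · intro x hx
    refine ⟨((KK A B τ).orderIsoOfFin (KK_card A B τ hd)).symm
      ⟨τ x, mem_KK A B τ (Finset.mem_union_left _ hx)⟩, ?_, ?_⟩
    · exact (mem_TT A B τ hd (Finset.mem_union_left _ hx)).2 hx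
    · rw [OrderIso.apply_symm_apply]; simp
lemma TTc_card : (TT A B τ hd)ᶜ.card = (A.card + B.card) - A.card := by
  rw [Finset.card_compl, TT_card A B τ hd, Fintype.card_fin]

def pp : Equiv.Perm (Fin (Fintype.card β)) :=
  buildPerm (Nat.le_add_right _ _) (KK A B τ) (KK_card A B τ hd) (TT A B τ hd)
    (TT_card A B τ hd) (TTc_card A B τ hd)

lemma pp_sorted {x y : β} (hx : x ∈ A) (hy : y ∈ B) :
    pp A B τ hd (τ x) < pp A B τ hd (τ y) := by
  have hxu : x ∈ A ∪ B := Finset.mem_union_left _ hx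
  have hyu : y ∈ A ∪ B := Finset.mem_union_right _ hy
  rw [pp, buildPerm_apply_mem _ _ _ _ _ _ (mem_KK A B τ hxu),
    buildPerm_apply_mem _ _ _ _ _ _ (mem_KK A B τ hyu)]
  have hpx : ((KK A B τ).orderIsoOfFin (KK_card A B τ hd)).symm ⟨τ x, mem_KK A B τ hxu⟩
      ∈ TT A B τ hd := (mem_TT A B τ hd hxu).2 hx
  have hpy : ((KK A B τ).orderIsoOfFin (KK_card A B τ hd)).symm ⟨τ y, mem_KK A B τ hyu⟩
      ∉ TT A B τ hd := by
    rw [mem_TT A B τ hd hyu]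
    exact fun h => (Finset.disjoint_left.1 hd h) hy
  have h1 := sortEquiv_lt (Nat.le_add_right A.card B.card) _ (TT_card A B τ hd)
    (TTc_card A B τ hd) hpx
  have h2 := sortEquiv_ge (Nat.le_add_right A.card B.card) _ (TT_card A B τ hd)
    (TTc_card A B τ hd) hpy
  have hlt : sortEquiv (Nat.le_add_right A.card B.card) (TT A B τ hd) (TT_card A B τ hd)
        (TTc_card A B τ hd) (((KK A B τ).orderIsoOfFin (KK_card A B τ hd)).symm
          ⟨τ x, mem_KK A B τ hxu⟩)
      < sortEquiv (Nat.le_add_right A.card B.card) (TT A B τ hd) (TT_card A B τ hd)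
        (TTc_card A B τ hd) (((KK A B τ).orderIsoOfFin (KK_card A B τ hd)).symm
          ⟨τ y, mem_KK A B τ hyu⟩) :=
    Fin.lt_def.2 (lt_of_lt_of_le h1 h2)
  exact Subtype.coe_lt_coe.2 (((KK A B τ).orderIsoOfFin (KK_card A B τ hd)).lt_iff_lt.2 hlt)

lemma pp_image : (A ∪ B).image (τ.trans (pp A B τ hd)) = KK A B τ := by
  have : (A ∪ B).image (τ.trans (pp A B τ hd)) = ((A ∪ B).image τ).image (pp A B τ hd) := by
    rw [Finset.image_image]; rfl
  rw [this]
  exact buildPerm_image _ _ _ _ _ _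

end Count

lemma pp_inj {β : Type*} [Fintype β] [DecidableEq β] (A B : Finset β) (hd : Disjoint A B)
    {τ1 τ2 : β ≃ Fin (Fintype.card β)}
    (h1 : τ1.trans (pp A B τ1 hd) = τ2.trans (pp A B τ2 hd))
    (h2 : TT A B τ1 hd = TT A B τ2 hd) : τ1 = τ2 := by
  have hK : KK A B τ1 = KK A B τ2 := by
    rw [← pp_image A B τ1 hd, ← pp_image A B τ2 hd, h1]
  have hpp : pp A B τ1 hd = pp A B τ2 hd := by
    rw [pp, pp]
    exact buildPerm_congr _ _ _ _ _ _ _ hK h2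
  rw [hpp] at h1
  apply Equiv.ext
  intro x
  have hx := DFunLike.congr_fun h1 x
  simp only [Equiv.trans_apply] at hx
  exact (pp A B τ2 hd).injective hx

lemma count_sorted {β : Type*} [Fintype β] [DecidableEq β] (A B : Finset β) (hd : Disjoint A B) :
    (Fintype.card β).factorial ≤
      ((A.card + B.card).choose A.card) *
        (Finset.univ.filter (fun f : β ≃ Fin (Fintype.card β) =>
          ∀ x ∈ A, ∀ y ∈ B, f x < f y)).card := by
  classical
  have key := Finset.card_le_card_of_injOn
    (f := fun τ : β ≃ Fin (Fintype.card β) => (τ.trans (pp A B τ hd), TT A B τ hd))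
    (s := (Finset.univ : Finset (β ≃ Fin (Fintype.card β))))
    (t := (Finset.univ.filter (fun f : β ≃ Fin (Fintype.card β) =>
          ∀ x ∈ A, ∀ y ∈ B, f x < f y)) ×ˢ
        Finset.powersetCard A.card (Finset.univ : Finset (Fin (A.card + B.card))))
    (by
      intro τ _
      rw [Finset.mem_coe, Finset.mem_product]
      constructor
      · rw [Finset.mem_filter]
        refine ⟨Finset.mem_univ _, fun x hx y hy => ?_⟩
        simpa using pp_sorted A B τ hd hx hy
      · exact Finset.mem_powersetCard_univ.2 (TT_card A B τ hd))
    (by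
      intro τ1 _ τ2 _ h
      rw [Prod.mk.injEq] at h
      exact pp_inj A B hd h.1 h.2)
  rw [Finset.card_product, Finset.card_powersetCard, Finset.card_univ,
    Fintype.card_equiv (Fintype.equivFin β), Finset.card_univ, Fintype.card_fin] at key
  rwa [mul_comm] at key

lemma central_mono : Monotone (fun m : ℕ => m.choose (m / 2)) := by
  apply monotone_nat_of_le_succ
  intro m
  exact le_trans (Nat.choose_le_choose _ (Nat.le_succ m)) (Nat.choose_le_middle _ _)

lemma bollobas {β ι : Type*} [Fintype β] [DecidableEq β] [Fintype ι] [DecidableEq ι] (q : ℕ)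
    (A B : ι → Finset β) (hd : ∀ i, Disjoint (A i) (B i))
    (hq : ∀ i, (A i).card + (B i).card ≤ q)
    (hcross : ∀ i j, i ≠ j → ((A i) ∩ (B j)).Nonempty) :
    Fintype.card ι ≤ q.choose (q / 2) := by
  classical
  set n := Fintype.card β with hn
  set E : ι → Finset (β ≃ Fin n) := fun i =>
    Finset.univ.filter (fun f => ∀ x ∈ A i, ∀ y ∈ B i, f x < f y) with hE
  have hdisj : ∀ i ∈ Finset.univ, ∀ j ∈ Finset.univ, i ≠ j → Disjoint (E i) (E j) := by
    intro i _ j _ hij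
    rw [Finset.disjoint_left]
    intro f hfi hfj
    obtain ⟨x, hx⟩ := hcross i j hij
    obtain ⟨y, hy⟩ := hcross j i (Ne.symm hij)
    simp only [hE, Finset.mem_filter] at hfi hfj
    have h1 := hfi.2 x (Finset.mem_inter.1 hx).1 y (Finset.mem_inter.1 hy).2
    have h2 := hfj.2 y (Finset.mem_inter.1 hy).1 x (Finset.mem_inter.1 hx).2
    exact absurd (h1.trans h2) (lt_irrefl _)
  have hsum : ∑ i : ι, (E i).card ≤ n.factorial := by
    rw [← Finset.card_biUnion hdisj]
    calc (Finset.univ.biUnion E).card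
        ≤ (Finset.univ : Finset (β ≃ Fin n)).card :=
          Finset.card_le_card (Finset.subset_univ _)
      _ = n.factorial := by rw [Finset.card_univ, Fintype.card_equiv (Fintype.equivFin β)]
  have hlow : ∀ i : ι, n.factorial ≤ q.choose (q / 2) * (E i).card := by
    intro i
    calc n.factorial
        ≤ ((A i).card + (B i).card).choose (A i).card * (E i).card := count_sorted _ _ (hd i)
      _ ≤ q.choose (q / 2) * (E i).card := by
          refine Nat.mul_le_mul_right _ (le_trans (Nat.choose_le_middle _ _) ?_)
          exact central_mono (hq i)
  have hmain : Fintype.card ι * n.factorial ≤ q.choose (q / 2) * n.factorial := by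
    calc Fintype.card ι * n.factorial = ∑ _i : ι, n.factorial := by
          rw [Finset.sum_const, Finset.card_univ, smul_eq_mul]
      _ ≤ ∑ i : ι, q.choose (q / 2) * (E i).card := Finset.sum_le_sum (fun i _ => hlow i)
      _ = q.choose (q / 2) * ∑ i : ι, (E i).card := by rw [Finset.mul_sum]
      _ ≤ q.choose (q / 2) * n.factorial := Nat.mul_le_mul_left _ hsum
  have := Nat.factorial_pos n
  exact Nat.le_of_mul_le_mul_right hmain this

end UIB

/-- Application of the Combinatorial Lemma: at most `C(q, ⌊q/2⌋)` indices `i`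
satisfy the non-containment condition against all `j ≠ i`; consequently at
least `N - C(q, ⌊q/2⌋)` indices `i` admit some `j ≠ i` with `U i ∩ V j ⊆ V i`. -/
theorem useful_indices_bound {α : Type*} [DecidableEq α] (N q : ℕ)
    (U V : Fin N → Finset α)
    (hcard : ∀ i, (U i).card + (V i).card ≤ q) :
    (Finset.univ.filter (fun i : Fin N =>
        ∀ j, j ≠ i → ¬ (U i ∩ V j ⊆ V i))).card ≤ q.choose (q / 2) ∧
    N - q.choose (q / 2) ≤
      (Finset.univ.filter (fun i : Fin N =>
        ∃ j, j ≠ i ∧ U i ∩ V j ⊆ V i)).card := by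
  classical
  set S := Finset.univ.filter (fun i : Fin N =>
      ∀ j, j ≠ i → ¬ (U i ∩ V j ⊆ V i)) with hS
  have hSmem : ∀ i : Fin N, i ∈ S → ∀ j, j ≠ i → ¬ (U i ∩ V j ⊆ V i) := by
    intro i hi
    exact (Finset.mem_filter.1 hi).2
  have hScard : S.card ≤ q.choose (q / 2) := by
    set X : Finset α := Finset.univ.biUnion (fun i : Fin N => U i ∪ V i) with hX
    have hUX : ∀ i, U i ⊆ X := fun i x hx =>
      Finset.mem_biUnion.2 ⟨i, Finset.mem_univ _, Finset.mem_union_left _ hx⟩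
    have hVX : ∀ i, V i ⊆ X := fun i x hx =>
      Finset.mem_biUnion.2 ⟨i, Finset.mem_univ _, Finset.mem_union_right _ hx⟩
    have key := UIB.bollobas (β := {x // x ∈ X}) (ι := {i // i ∈ S}) q
      (fun i => (U i.1 \ V i.1).subtype (· ∈ X))
      (fun i => (V i.1).subtype (· ∈ X))
      (by
        intro i
        rw [Finset.disjoint_left]
        intro x hx hx'
        rw [Finset.mem_subtype] at hx hx'
        exact (Finset.mem_sdiff.1 hx).2 hx')
      (by
        intro i
        have h1 : ((U i.1 \ V i.1).subtype (· ∈ X)).card ≤ (U i.1).card := by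
          calc ((U i.1 \ V i.1).subtype (· ∈ X)).card
              ≤ (U i.1 \ V i.1).card := by
                rw [Finset.card_subtype]
                exact Finset.card_filter_le _ _
              _ ≤ (U i.1).card := Finset.card_le_card (Finset.sdiff_subset)
        have h2 : ((V i.1).subtype (· ∈ X)).card ≤ (V i.1).card := by
          rw [Finset.card_subtype]
          exact Finset.card_filter_le _ _
        calc ((U i.1 \ V i.1).subtype (· ∈ X)).card + ((V i.1).subtype (· ∈ X)).card
            ≤ (U i.1).card + (V i.1).card := Nat.add_le_add h1 h2
          _ ≤ q := hcard i.1)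
      (by
        intro i j hij
        have hne : (j.1 : Fin N) ≠ i.1 := fun h => hij (Subtype.ext h.symm)
        obtain ⟨x, hx, hnx⟩ := Finset.not_subset.1 (hSmem i.1 i.2 j.1 hne)
        have hx1 := (Finset.mem_inter.1 hx).1
        have hx2 := (Finset.mem_inter.1 hx).2
        have hxX : x ∈ X := hUX i.1 hx1
        refine ⟨⟨x, hxX⟩, Finset.mem_inter.2 ⟨?_, ?_⟩⟩
        · rw [Finset.mem_subtype]
          exact Finset.mem_sdiff.2 ⟨hx1, hnx⟩
        · rw [Finset.mem_subtype]
          exact hx2)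
    rwa [Fintype.card_coe] at key
  refine ⟨hScard, ?_⟩
  have hsplit := Finset.card_filter_add_card_filter_not
    (s := (Finset.univ : Finset (Fin N)))
    (p := fun i : Fin N => ∀ j, j ≠ i → ¬ (U i ∩ V j ⊆ V i))
  have hcongr : (Finset.univ.filter (fun i : Fin N =>
      ¬ ∀ j, j ≠ i → ¬ (U i ∩ V j ⊆ V i))) =
      (Finset.univ.filter (fun i : Fin N => ∃ j, j ≠ i ∧ U i ∩ V j ⊆ V i)) := by
    apply Finset.filter_congr
    intro i _
    constructor
    · intro h
      push_neg at h
      exact h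
    · intro h h'
      obtain ⟨j, hj, hsub⟩ := h
      exact h' j hj hsub
  rw [hcongr] at hsplit
  rw [Finset.card_univ, Fintype.card_fin, ← hS] at hsplit
  omega
end

section
/- Let H₂ be the binary entropy function and let c = (3 − √5)/2. Then for every x in the open interval (0, 1), H₂(x)/(1 + x) ≤ H₂(c)/(1 + c); that is, c = (3 − √5)/2 maximizes the function x ↦ H₂(x)/(1 + x) on (0, 1). -/
/-- The binary entropy function `H₂(x) = -x·log₂ x - (1-x)·log₂(1-x)`
(with the convention `log₂ 0 = 0`, so `H₂ 0 = H₂ 1 = 0`). -/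
noncomputable def binEntropy2 (x : ℝ) : ℝ :=
  -(x * Real.logb 2 x) - (1 - x) * Real.logb 2 (1 - x)

/-- `c = (3 - √5)/2` maximizes `x ↦ H₂(x)/(1+x)` on `(0, 1)`. -/
theorem entropy_ratio_maximized :
    ∀ x ∈ Set.Ioo (0 : ℝ) 1,
      binEntropy2 x / (1 + x) ≤
        binEntropy2 ((3 - Real.sqrt 5) / 2) / (1 + (3 - Real.sqrt 5) / 2) := by
  have hs5 : Real.sqrt 5 ^ 2 = 5 := Real.sq_sqrt (by norm_num)
  have hsnn : (0:ℝ) ≤ Real.sqrt 5 := Real.sqrt_nonneg 5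
  have hslt : Real.sqrt 5 < 3 := by nlinarith
  have hsgt : 1 < Real.sqrt 5 := by nlinarith
  set s := Real.sqrt 5
  set c : ℝ := (3 - s) / 2 with hc
  set φ : ℝ := (1 + s) / 2 with hφ
  have hc0 : 0 < c := by rw [hc]; linarith
  have hc1 : c < 1 := by rw [hc]; linarith
  have hφ1 : 1 < φ := by rw [hφ]; linarith
  have hφ0 : 0 < φ := by linarith
  have hcφ : c = (φ ^ 2)⁻¹ := by
    apply eq_inv_of_mul_eq_one_left
    rw [hc, hφ]; ring_nf; nlinarith
  have h1cφ : 1 - c = φ⁻¹ := by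
    apply eq_inv_of_mul_eq_one_left
    rw [hc, hφ]; ring_nf; nlinarith
  set L := Real.log φ with hL
  have hlogc : Real.log c = -(2 * L) := by
    rw [hcφ, Real.log_inv, Real.log_pow]; push_cast; ring
  have hlog1c : Real.log (1 - c) = -L := by
    rw [h1cφ, Real.log_inv]
  have hlog2 : (0:ℝ) < Real.log 2 := Real.log_pos (by norm_num)
  -- key inequality
  have key : ∀ x ∈ Set.Ioo (0:ℝ) 1,
      -(x * Real.log x) - (1 - x) * Real.log (1 - x) ≤ (1 + x) * L := by
    rintro x ⟨hx0, hx1⟩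
    have hx1' : 0 < 1 - x := by linarith
    have e1 : x * (Real.log c - Real.log x) ≤ c - x := by
      have h := Real.log_le_sub_one_of_pos (show 0 < c / x by positivity)
      rw [Real.log_div (ne_of_gt hc0) (ne_of_gt hx0)] at h
      have := mul_le_mul_of_nonneg_left h hx0.le
      calc x * (Real.log c - Real.log x) ≤ x * (c / x - 1) := this
        _ = c - x := by field_simp
    have e2 : (1 - x) * (Real.log (1 - c) - Real.log (1 - x)) ≤ (1 - c) - (1 - x) := by
      have h := Real.log_le_sub_one_of_pos (show 0 < (1 - c) / (1 - x) from div_pos (by linarith : (0:ℝ) < 1 - c) hx1')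
      rw [Real.log_div (by linarith) (ne_of_gt hx1')] at h
      have := mul_le_mul_of_nonneg_left h hx1'.le
      calc (1 - x) * (Real.log (1 - c) - Real.log (1 - x))
          ≤ (1 - x) * ((1 - c) / (1 - x) - 1) := this
        _ = (1 - c) - (1 - x) := by field_simp
    rw [hlogc] at e1
    rw [hlog1c] at e2
    nlinarith [e1, e2]
  -- value at c
  have hval : binEntropy2 c / (1 + c) = Real.logb 2 φ := by
    have h1c : (0:ℝ) < 1 + c := by linarith
    unfold binEntropy2
    rw [Real.logb, Real.logb, Real.logb, hlogc, hlog1c]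
    field_simp
    ring
  rintro x ⟨hx0, hx1⟩
  rw [hval]
  have h1x : (0:ℝ) < 1 + x := by linarith
  rw [div_le_iff₀ h1x]
  have hk := key x ⟨hx0, hx1⟩
  unfold binEntropy2
  rw [Real.logb, Real.logb, Real.logb]
  rw [show -(x * (Real.log x / Real.log 2)) - (1 - x) * (Real.log (1 - x) / Real.log 2)
      = (-(x * Real.log x) - (1 - x) * Real.log (1 - x)) / Real.log 2 by ring]
  rw [div_le_iff₀ hlog2]
  calc -(x * Real.log x) - (1 - x) * Real.log (1 - x) ≤ (1 + x) * L := hk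
    _ = Real.log φ / Real.log 2 * (1 + x) * Real.log 2 := by rw [hL]; field_simp
end
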